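/- arXiv:2411.19877 — 3 statements merged into one kernel-verified Lean document; each statement's English description precedes it below -/
import Mathlib

section
/- If x ∈ range(A^T), then for any integer s ≥ 0, x^T (I - A^T A / ||A||_F^2)^s x ≤ (1 - κ_dem^{-2})^s ||x||^2, where κ_dem = ||A^+|| ||A||_F is the Demmel condition number. -/
open Matrix Finset
noncomputable section

/-- Squared Euclidean norm of a vector. -/
def vnormSq {k : ℕ} (x : Fin k → ℝ) : ℝ := ∑ i, x i ^ 2

/-- Squared Frobenius norm of a matrix. -/
def frobSq {n d : ℕ} (A : Matrix (Fin n) (Fin d) ℝ) : ℝ := ∑ i, vnormSq (A i)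

/-- Row sampling probability ‖a_i‖²/‖A‖_F² used by randomized Kaczmarz. -/
def rowProb {n d : ℕ} (A : Matrix (Fin n) (Fin d) ℝ) (i : Fin n) : ℝ := vnormSq (A i) / frobSq A

/-- Spectral norm (ℓ²-operator norm) of a matrix. -/
def matSpectralNorm {n d : ℕ} (M : Matrix (Fin n) (Fin d) ℝ) : ℝ :=
  ‖LinearMap.toContinuousLinearMap (Matrix.toEuclideanLin M)‖

/-- The four Penrose conditions characterizing the Moore–Penrose pseudoinverse. -/
def IsMoorePenrose {n d : ℕ} (A : Matrix (Fin n) (Fin d) ℝ) (Ap : Matrix (Fin d) (Fin n) ℝ) : Prop :=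
  A * Ap * A = A ∧ Ap * A * Ap = Ap ∧ (A * Ap)ᵀ = A * Ap ∧ (Ap * A)ᵀ = Ap * A

/-- Demmel condition number κ_dem = ‖A⁺‖ ‖A‖_F. -/
def kdem {n d : ℕ} (A : Matrix (Fin n) (Fin d) ℝ) (Ap : Matrix (Fin d) (Fin n) ℝ) : ℝ :=
  matSpectralNorm Ap * Real.sqrt (frobSq A)

/-- One randomized Kaczmarz update using row i. -/
def rkStep {n d : ℕ} (A : Matrix (Fin n) (Fin d) ℝ) (b : Fin n → ℝ) (i : Fin n) (x : Fin d → ℝ) :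
    Fin d → ℝ := x + ((b i - A i ⬝ᵥ x) / vnormSq (A i)) • A i

/-- Randomized Kaczmarz iterates along a fixed path ω of row indices. -/
def rkSeq {n d : ℕ} (A : Matrix (Fin n) (Fin d) ℝ) (b : Fin n → ℝ) (x0 : Fin d → ℝ)
    (ω : ℕ → Fin n) : ℕ → Fin d → ℝ
  | 0 => x0
  | t + 1 => rkStep A b (ω t) (rkSeq A b x0 ω t)

/-- Extend a finite path of indices to an infinite one. -/
def extendPath {n T : ℕ} [NeZero n] (ω : Fin T → Fin n) : ℕ → Fin n :=
  fun s => if h : s < T then ω ⟨s, h⟩ else 0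

/-- Probability of a finite path of i.i.d. row indices. -/
def pathWeight {n d T : ℕ} (A : Matrix (Fin n) (Fin d) ℝ) (ω : Fin T → Fin n) : ℝ :=
  ∏ t, rowProb A (ω t)

/-- The expected one-step Kaczmarz contraction matrix I - AᵀA/‖A‖_F². -/
def kacMat {n d : ℕ} (A : Matrix (Fin n) (Fin d) ℝ) : Matrix (Fin d) (Fin d) ℝ :=
  1 - (frobSq A)⁻¹ • (Aᵀ * A)

/-- x lies in the row space range(Aᵀ). -/
def inRowSpace {n d : ℕ} (A : Matrix (Fin n) (Fin d) ℝ) (x : Fin d → ℝ) : Prop :=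
  ∃ u : Fin n → ℝ, x = Aᵀ *ᵥ u

/-- RK-RR iterates: Kaczmarz step followed by weight decay by μ. -/
def rrSeq {n d : ℕ} (A : Matrix (Fin n) (Fin d) ℝ) (b : Fin n → ℝ) (μ : ℝ) (x0 : Fin d → ℝ)
    (ω : ℕ → Fin n) : ℕ → Fin d → ℝ
  | 0 => x0
  | t + 1 => μ • rkStep A b (ω t) (rrSeq A b μ x0 ω t)

/-- Orthogonal projection step (I - a aᵀ/‖a‖²) x for row a = A i. -/
def projStep {n d : ℕ} (A : Matrix (Fin n) (Fin d) ℝ) (i : Fin n) (x : Fin d → ℝ) : Fin d → ℝ :=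
  x - ((A i ⬝ᵥ x) / vnormSq (A i)) • A i

/-- RK-RR bias sequence m_{t+1} = μ (I - a aᵀ/‖a‖²) m_t. -/
def biasSeq {n d : ℕ} (A : Matrix (Fin n) (Fin d) ℝ) (μ : ℝ) (m0 : Fin d → ℝ)
    (ω : ℕ → Fin n) : ℕ → Fin d → ℝ
  | 0 => m0
  | t + 1 => μ • projStep A (ω t) (biasSeq A μ m0 ω t)

/-- RK-RR variance sequence v_{t+1} = μ(I - aaᵀ/‖a‖²)v_t + μ (b_i - aᵀx_μ)a/‖a‖² - (1-μ)x_μ. -/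
def varSeq {n d : ℕ} (A : Matrix (Fin n) (Fin d) ℝ) (b : Fin n → ℝ) (μ : ℝ) (xmu : Fin d → ℝ)
    (ω : ℕ → Fin n) : ℕ → Fin d → ℝ
  | 0 => 0
  | t + 1 => μ • projStep A (ω t) (varSeq A b μ xmu ω t)
      + (μ * ((b (ω t) - A (ω t) ⬝ᵥ xmu) / vnormSq (A (ω t)))) • A (ω t)
      - (1 - μ) • xmu

/-- Covariance matrix Σ = I_m + v 1_m 1_mᵀ. -/
def covM (m : ℕ) (v : ℝ) : Matrix (Fin m) (Fin m) ℝ := 1 + v • Matrix.of fun _ _ => 1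

/-- Block Σ_{S,T} of the covariance matrix Σ = I + v 1 1ᵀ. -/
def subBlock {m : ℕ} (v : ℝ) (S T : Finset (Fin m)) : Matrix ↥S ↥T ℝ :=
  (covM m v).submatrix (fun i => i.1) (fun j => j.1)

/-- A deterministic adaptive algorithm that accesses at most t entries of b
(given full access to A) and outputs an estimate of the least-squares solution. -/
structure RowAccessAlg (d t : ℕ) where
  query : (n : ℕ) → Matrix (Fin n) (Fin d) ℝ → (j : Fin t) → (Fin (j : ℕ) → ℝ) → Fin n
  output : (n : ℕ) → Matrix (Fin n) (Fin d) ℝ → (Fin t → ℝ) → Fin d → ℝ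

/-- The successive answers to the algorithm's adaptive queries. -/
def RowAccessAlg.answers {d t : ℕ} (alg : RowAccessAlg d t) (n : ℕ)
    (A : Matrix (Fin n) (Fin d) ℝ) (b : Fin n → ℝ) : (j : ℕ) → j < t → ℝ
  | j, h => b (alg.query n A ⟨j, h⟩ fun i => alg.answers n A b i (i.isLt.trans h))
  termination_by j _ => j

/-- The algorithm's output estimate on the problem (A, b). -/
def RowAccessAlg.run {d t : ℕ} (alg : RowAccessAlg d t) (n : ℕ)
    (A : Matrix (Fin n) (Fin d) ℝ) (b : Fin n → ℝ) : Fin d → ℝ :=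
  alg.output n A fun j => alg.answers n A b j j.isLt

lemma vnormSq_eq_dot {k : ℕ} (x : Fin k → ℝ) : vnormSq x = x ⬝ᵥ x := by
  simp [vnormSq, dotProduct, sq]

lemma vnormSq_nonneg {k : ℕ} (x : Fin k → ℝ) : 0 ≤ vnormSq x :=
  Finset.sum_nonneg fun i _ => sq_nonneg _

lemma vnormSq_eq_zero {k : ℕ} {x : Fin k → ℝ} (h : vnormSq x = 0) : x = 0 := by
  funext i
  have := (Finset.sum_eq_zero_iff_of_nonneg (fun i _ => sq_nonneg (x i))).mp h i (mem_univ i)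
  exact pow_eq_zero_iff (by norm_num) |>.mp this

lemma frobSq_nonneg {n d : ℕ} (A : Matrix (Fin n) (Fin d) ℝ) : 0 ≤ frobSq A :=
  Finset.sum_nonneg fun i _ => vnormSq_nonneg _

lemma frobSq_pos {n d : ℕ} {A : Matrix (Fin n) (Fin d) ℝ} (hA : A ≠ 0) : 0 < frobSq A := by
  rcases (frobSq_nonneg A).lt_or_eq with h | h
  · exact h
  · exfalso; apply hA
    ext i j
    have hrow := (Finset.sum_eq_zero_iff_of_nonneg (fun i _ => vnormSq_nonneg (A i))).mp h.symm i
      (mem_univ i)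
    have := congrFun (vnormSq_eq_zero hrow) j
    simpa using this

lemma norm_euclid_sq {k : ℕ} (w : EuclideanSpace ℝ (Fin k)) : ‖w‖ ^ 2 = vnormSq w := by
  rw [EuclideanSpace.norm_eq, Real.sq_sqrt (Finset.sum_nonneg fun i _ => sq_nonneg _)]
  simp [vnormSq, sq_abs]

lemma vnormSq_mulVec_le {n d : ℕ} (M : Matrix (Fin n) (Fin d) ℝ) (w : Fin d → ℝ) :
    vnormSq (M *ᵥ w) ≤ matSpectralNorm M ^ 2 * vnormSq w := by
  set f := LinearMap.toContinuousLinearMap (Matrix.toEuclideanLin M)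
  set w' : EuclideanSpace ℝ (Fin d) := (WithLp.equiv 2 (Fin d → ℝ)).symm w
  have h := f.le_opNorm w'
  have h2 : ‖f w'‖ ^ 2 ≤ (matSpectralNorm M * ‖w'‖) ^ 2 := by
    apply pow_le_pow_left₀ (norm_nonneg _) h
  have hfw : (f w' : EuclideanSpace ℝ (Fin n)) = (WithLp.equiv 2 (Fin n → ℝ)).symm (M *ᵥ w) := by
    simp [f, w', Matrix.toEuclideanLin_apply_piLp_toLp]
  calc vnormSq (M *ᵥ w) = ‖f w'‖ ^ 2 := by rw [hfw, norm_euclid_sq]; rfl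
    _ ≤ (matSpectralNorm M * ‖w'‖) ^ 2 := h2
    _ = matSpectralNorm M ^ 2 * vnormSq w := by rw [mul_pow, norm_euclid_sq]; rfl

lemma trace_transpose_mul_self {n d : ℕ} (A : Matrix (Fin n) (Fin d) ℝ) :
    (Aᵀ * A).trace = frobSq A := by
  simp only [Matrix.trace, Matrix.diag_apply, mul_apply, frobSq, vnormSq, transpose_apply]
  rw [Finset.sum_comm]
  simp [sq]

lemma sum_eigenvalues_eq {d : ℕ} {B : Matrix (Fin d) (Fin d) ℝ} (hB : B.IsHermitian) :
    ∑ i, hB.eigenvalues i = B.trace := by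
  have h := hB.spectral_theorem
  have hU : star (hB.eigenvectorUnitary : Matrix (Fin d) (Fin d) ℝ) *
      (hB.eigenvectorUnitary : Matrix (Fin d) (Fin d) ℝ) = 1 :=
    Unitary.coe_star_mul_self _
  calc ∑ i, hB.eigenvalues i
      = (diagonal (RCLike.ofReal ∘ hB.eigenvalues) : Matrix (Fin d) (Fin d) ℝ).trace := by
        simp [Matrix.trace_diagonal]
    _ = B.trace := by
        conv_rhs => rw [h]
        rw [Unitary.conjStarAlgAut_apply, Matrix.trace_mul_cycle, hU, one_mul]


lemma dot_sum {k : ℕ} {ι : Type*} (t : Finset ι) (x : Fin k → ℝ) (f : ι → Fin k → ℝ) :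
    x ⬝ᵥ (∑ i ∈ t, f i) = ∑ i ∈ t, x ⬝ᵥ f i := by
  simp only [dotProduct, Finset.sum_apply, Finset.mul_sum]
  exact Finset.sum_comm

lemma mulVec_sum' {a b : ℕ} {ι : Type*} (t : Finset ι) (M : Matrix (Fin a) (Fin b) ℝ)
    (f : ι → Fin b → ℝ) : M *ᵥ (∑ i ∈ t, f i) = ∑ i ∈ t, M *ᵥ f i := by
  ext j
  simp only [Matrix.mulVec, dotProduct, Finset.sum_apply, Finset.mul_sum]
  exact Finset.sum_comm

/-- for x ∈ range(Aᵀ) and s ≥ 0,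
xᵀ (I - AᵀA/‖A‖_F²)^s x ≤ (1 - κ_dem⁻²)^s ‖x‖². -/
theorem demmel_power_bound {n d : ℕ}
    (A : Matrix (Fin n) (Fin d) ℝ) (hA : A ≠ 0)
    (Ap : Matrix (Fin d) (Fin n) ℝ) (hAp : IsMoorePenrose A Ap)
    (x : Fin d → ℝ) (hx : inRowSpace A x) (s : ℕ) :
    x ⬝ᵥ ((kacMat A ^ s) *ᵥ x) ≤ (1 - (kdem A Ap ^ 2)⁻¹) ^ s * vnormSq x := by
  classical
  obtain ⟨u, hu⟩ := hx
  have hF0 : 0 < frobSq A := frobSq_pos hA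
  have hB : (Aᵀ * A).IsHermitian := by
    simpa [Matrix.conjTranspose_eq_transpose_of_trivial] using Matrix.isHermitian_conjTranspose_mul_self A
  set μ : Fin d → ℝ := hB.eigenvalues with hμdef
  set v : Fin d → (Fin d → ℝ) := fun i => ⇑(hB.eigenvectorBasis i) with hvdef
  have heig : ∀ i, (Aᵀ * A) *ᵥ v i = μ i • v i := fun i => hB.mulVec_eigenvectorBasis i
  have hv1 : ∀ i, vnormSq (v i) = 1 := by
    intro i
    have h1 : ‖hB.eigenvectorBasis i‖ = 1 := hB.eigenvectorBasis.orthonormal.1 i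
    have := norm_euclid_sq (hB.eigenvectorBasis i)
    rw [h1] at this
    simpa [v] using this.symm
  have hAv : ∀ i, vnormSq (A *ᵥ v i) = μ i := by
    intro i
    have h1 : v i ⬝ᵥ ((Aᵀ * A) *ᵥ v i) = μ i := by
      rw [heig i, dotProduct_smul, ← vnormSq_eq_dot, hv1 i]
      simp
    rw [← h1, ← Matrix.mulVec_mulVec, Matrix.dotProduct_mulVec, Matrix.vecMul_transpose,
      vnormSq_eq_dot]
  have hμ0 : ∀ i, 0 ≤ μ i := fun i => (hAv i) ▸ vnormSq_nonneg _
  have hμF : ∀ i, μ i ≤ frobSq A := by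
    intro i
    have hsum := sum_eigenvalues_eq hB
    rw [trace_transpose_mul_self] at hsum
    calc μ i ≤ ∑ j, μ j := Finset.single_le_sum (fun j _ => hμ0 j) (mem_univ i)
      _ = frobSq A := hsum
  have hkac : ∀ (t : ℕ) i, (kacMat A ^ t) *ᵥ v i
      = ((1 - (frobSq A)⁻¹ * μ i) ^ t) • v i := by
    intro t i
    induction t with
    | zero => simp
    | succ t ih =>
      have h1 : kacMat A *ᵥ v i = (1 - (frobSq A)⁻¹ * μ i) • v i := by
        rw [kacMat, Matrix.sub_mulVec, Matrix.smul_mulVec, heig i, Matrix.one_mulVec,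
          smul_smul, sub_smul, one_smul]
      rw [pow_succ, ← Matrix.mulVec_mulVec, h1, Matrix.mulVec_smul, ih, smul_smul, pow_succ,
        mul_comm]
  set y : Fin d → ℝ := fun i => v i ⬝ᵥ x with hydef
  have hx_exp : x = ∑ i, y i • v i := by
    have h := hB.eigenvectorBasis.sum_repr ((WithLp.equiv 2 (Fin d → ℝ)).symm x)
    funext j
    have h2 := congrArg (fun w => WithLp.equiv 2 (Fin d → ℝ) w j) h
    simp only [OrthonormalBasis.repr_apply_apply, PiLp.inner_apply, RCLike.inner_apply,
      starRingEnd_apply, star_trivial, Equiv.apply_symm_apply] at h2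
    rw [← h2]
    simp [y, v, dotProduct, Finset.sum_apply, mul_comm]
  have hy0 : ∀ i, μ i = 0 → y i = 0 := by
    intro i hi
    have hAvz : A *ᵥ v i = 0 := vnormSq_eq_zero (by rw [hAv i, hi])
    have : y i = (A *ᵥ v i) ⬝ᵥ u := by
      rw [hydef]
      simp only [hu, Matrix.dotProduct_mulVec, Matrix.vecMul_transpose]
    rw [this, hAvz, zero_dotProduct]
  have hlow : ∀ i, μ i ≠ 0 → 1 ≤ matSpectralNorm Ap ^ 2 * μ i := by
    intro i hi
    have hproj : Ap *ᵥ (A *ᵥ v i) = v i := by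
      have hPA : Ap * A * Aᵀ = Aᵀ := by
        have h4 : Ap * A * Aᵀ = (A * (Ap * A))ᵀ := by
          rw [Matrix.transpose_mul, hAp.2.2.2]
        rw [h4, ← Matrix.mul_assoc, hAp.1]
      have hvi : v i = (μ i)⁻¹ • ((Aᵀ * A) *ᵥ v i) := by
        rw [heig i, smul_smul, inv_mul_cancel₀ hi, one_smul]
      calc Ap *ᵥ (A *ᵥ v i) = (Ap * A) *ᵥ v i := by rw [Matrix.mulVec_mulVec]
        _ = (Ap * A) *ᵥ ((μ i)⁻¹ • ((Aᵀ * A) *ᵥ v i)) := by rw [← hvi]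
        _ = (μ i)⁻¹ • ((Ap * A * (Aᵀ * A)) *ᵥ v i) := by
            rw [Matrix.mulVec_smul, Matrix.mulVec_mulVec]
        _ = (μ i)⁻¹ • ((Aᵀ * A) *ᵥ v i) := by rw [← Matrix.mul_assoc, hPA]
        _ = v i := by rw [← hvi]
    have h1 : vnormSq (Ap *ᵥ (A *ᵥ v i)) ≤ matSpectralNorm Ap ^ 2 * vnormSq (A *ᵥ v i) :=
      vnormSq_mulVec_le Ap (A *ᵥ v i)
    rw [hproj, hv1 i, hAv i] at h1
    exact h1
  have hkd : kdem A Ap ^ 2 = matSpectralNorm Ap ^ 2 * frobSq A := by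
    rw [kdem, mul_pow, Real.sq_sqrt (frobSq_nonneg A)]
  -- compute LHS
  have hstep : (kacMat A ^ s) *ᵥ x = ∑ i, ((1 - (frobSq A)⁻¹ * μ i) ^ s * y i) • v i := by
    conv_lhs => rw [hx_exp]
    rw [mulVec_sum']
    refine Finset.sum_congr rfl fun i _ => ?_
    rw [Matrix.mulVec_smul, hkac s i, smul_smul, mul_comm]
  have hLHS : x ⬝ᵥ ((kacMat A ^ s) *ᵥ x)
      = ∑ i, (1 - (frobSq A)⁻¹ * μ i) ^ s * y i ^ 2 := by
    rw [hstep, dot_sum]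
    refine Finset.sum_congr rfl fun i _ => ?_
    rw [dotProduct_smul, smul_eq_mul, dotProduct_comm]
    ring
  have hRHS : vnormSq x = ∑ i, y i ^ 2 := by
    rw [vnormSq_eq_dot]
    nth_rewrite 2 [hx_exp]
    rw [dot_sum]
    refine Finset.sum_congr rfl fun i _ => ?_
    rw [dotProduct_smul, smul_eq_mul, dotProduct_comm]
    ring
  rw [hLHS, hRHS, Finset.mul_sum]
  refine Finset.sum_le_sum fun i _ => ?_
  by_cases hyi : y i = 0
  · simp [hyi]
  · have hμi : μ i ≠ 0 := fun h => hyi (hy0 i h)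
    have hμpos : 0 < μ i := lt_of_le_of_ne (hμ0 i) (Ne.symm hμi)
    have h1 := hlow i hμi
    have hsN : 0 < matSpectralNorm Ap ^ 2 := by
      nlinarith [hμF i, hF0]
    have hd0 : 0 ≤ 1 - (frobSq A)⁻¹ * μ i := by
      have : (frobSq A)⁻¹ * μ i ≤ (frobSq A)⁻¹ * frobSq A :=
        mul_le_mul_of_nonneg_left (hμF i) (inv_nonneg.mpr hF0.le)
      rw [inv_mul_cancel₀ hF0.ne'] at this
      linarith
    have hdρ : 1 - (frobSq A)⁻¹ * μ i ≤ 1 - (kdem A Ap ^ 2)⁻¹ := by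
      rw [hkd]
      have h2 : (matSpectralNorm Ap ^ 2)⁻¹ ≤ μ i := by
        rw [inv_le_iff_one_le_mul₀ hsN]
        linarith [h1]
      have h3 : (matSpectralNorm Ap ^ 2 * frobSq A)⁻¹ ≤ (frobSq A)⁻¹ * μ i := by
        rw [mul_inv, mul_comm]
        exact mul_le_mul_of_nonneg_left h2 (inv_nonneg.mpr hF0.le)
      linarith
    have := pow_le_pow_left₀ hd0 hdρ s
    exact mul_le_mul_of_nonneg_right this (sq_nonneg _)
end
end

section
/- Assume x_0 ∈ range(A^T). Then the randomized Kaczmarz iterates satisfy E||x_r - x_star||^2 ≤ (1 - κ_dem^{-2})^r ||x_0 - x_star||^2 + ||A^+||^2 ||b - A x_star||^2 for every r ≥ 0. -/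
open Matrix Finset
noncomputable section

lemma vnormSq_pos {k : ℕ} {x : Fin k → ℝ} (h : x ≠ 0) : 0 < vnormSq x := by
  obtain ⟨i, hi⟩ : ∃ i, x i ≠ 0 := by
    by_contra hc; push_neg at hc; exact h (funext hc)
  exact Finset.sum_pos' (fun j _ => sq_nonneg _) ⟨i, Finset.mem_univ i, by positivity⟩

lemma vnormSq_eq_norm {k : ℕ} (x : Fin k → ℝ) :
    vnormSq x = ‖(WithLp.equiv 2 (Fin k → ℝ)).symm x‖ ^ 2 := by
  rw [EuclideanSpace.norm_eq, Real.sq_sqrt (by positivity)]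
  simp [vnormSq]

lemma mulVec_vnormSq_le {n d : ℕ} (M : Matrix (Fin n) (Fin d) ℝ) (v : Fin d → ℝ) :
    vnormSq (M *ᵥ v) ≤ matSpectralNorm M ^ 2 * vnormSq v := by
  rw [vnormSq_eq_norm, vnormSq_eq_norm]
  have he : (LinearMap.toContinuousLinearMap (Matrix.toEuclideanLin M))
      ((WithLp.equiv 2 (Fin d → ℝ)).symm v) = (WithLp.equiv 2 (Fin n → ℝ)).symm (M *ᵥ v) := by
    simp [Matrix.toEuclideanLin_apply]
  have h := (LinearMap.toContinuousLinearMap (Matrix.toEuclideanLin M)).le_opNorm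
    ((WithLp.equiv 2 (Fin d → ℝ)).symm v)
  rw [he] at h
  calc ‖(WithLp.equiv 2 (Fin n → ℝ)).symm (M *ᵥ v)‖ ^ 2
      ≤ (matSpectralNorm M * ‖(WithLp.equiv 2 (Fin d → ℝ)).symm v‖) ^ 2 :=
        pow_le_pow_left₀ (norm_nonneg _) h 2
    _ = matSpectralNorm M ^ 2 * ‖(WithLp.equiv 2 (Fin d → ℝ)).symm v‖ ^ 2 := by ring

lemma vnormSq_mulVec {n d : ℕ} (A : Matrix (Fin n) (Fin d) ℝ) (e : Fin d → ℝ) :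
    vnormSq (A *ᵥ e) = ∑ i, (A i ⬝ᵥ e) ^ 2 := by
  simp [vnormSq, Matrix.mulVec]

lemma mulVec_le_frob {n d : ℕ} (A : Matrix (Fin n) (Fin d) ℝ) (e : Fin d → ℝ) :
    vnormSq (A *ᵥ e) ≤ frobSq A * vnormSq e := by
  rw [vnormSq_mulVec, frobSq, Finset.sum_mul]
  refine Finset.sum_le_sum fun i _ => ?_
  simpa [dotProduct, vnormSq] using Finset.sum_mul_sq_le_sq_mul_sq Finset.univ (A i) e

lemma row_inRowSpace {n d : ℕ} (A : Matrix (Fin n) (Fin d) ℝ) (i : Fin n) :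
    A i = Aᵀ *ᵥ Pi.single i 1 := by
  ext j
  simp [Matrix.mulVec, dotProduct, Pi.single_apply]

lemma inRowSpace_add_smul {n d : ℕ} {A : Matrix (Fin n) (Fin d) ℝ} {x : Fin d → ℝ}
    (h : inRowSpace A x) (c : ℝ) (i : Fin n) : inRowSpace A (x + c • A i) := by
  obtain ⟨u, rfl⟩ := h
  refine ⟨u + c • (Pi.single i 1 : Fin n → ℝ), ?_⟩
  rw [Matrix.mulVec_add, Matrix.mulVec_smul, ← row_inRowSpace]

lemma inRowSpace_sub {n d : ℕ} {A : Matrix (Fin n) (Fin d) ℝ} {x y : Fin d → ℝ}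
    (hx : inRowSpace A x) (hy : inRowSpace A y) : inRowSpace A (x - y) := by
  obtain ⟨u, rfl⟩ := hx; obtain ⟨v, rfl⟩ := hy
  exact ⟨u - v, (Matrix.mulVec_sub _ _ _).symm⟩

lemma xstar_inRowSpace {n d : ℕ} {A : Matrix (Fin n) (Fin d) ℝ} {Ap : Matrix (Fin d) (Fin n) ℝ}
    (hAp : IsMoorePenrose A Ap) (b : Fin n → ℝ) : inRowSpace A (Ap *ᵥ b) := by
  refine ⟨Apᵀ *ᵥ (Ap *ᵥ b), ?_⟩
  rw [Matrix.mulVec_mulVec, Matrix.mulVec_mulVec]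
  have hM : Aᵀ * Apᵀ * Ap = Ap := by
    calc Aᵀ * Apᵀ * Ap = (Ap * A)ᵀ * Ap := by rw [Matrix.transpose_mul]
      _ = Ap * A * Ap := by rw [hAp.2.2.2]
      _ = Ap := hAp.2.1
  rw [hM]

lemma rowspace_bound {n d : ℕ} {A : Matrix (Fin n) (Fin d) ℝ} {Ap : Matrix (Fin d) (Fin n) ℝ}
    (hAp : IsMoorePenrose A Ap) {e : Fin d → ℝ} (he : inRowSpace A e) :
    vnormSq e ≤ matSpectralNorm Ap ^ 2 * vnormSq (A *ᵥ e) := by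
  obtain ⟨u, rfl⟩ := he
  have key : Ap *ᵥ (A *ᵥ (Aᵀ *ᵥ u)) = Aᵀ *ᵥ u := by
    rw [Matrix.mulVec_mulVec, Matrix.mulVec_mulVec]
    have hM : Ap * A * Aᵀ = Aᵀ := by
      calc Ap * A * Aᵀ = (Ap * A)ᵀ * Aᵀ := by rw [hAp.2.2.2]
        _ = (A * (Ap * A))ᵀ := (Matrix.transpose_mul _ _).symm
        _ = Aᵀ := by rw [← Matrix.mul_assoc, hAp.1]
    rw [hM]
  calc vnormSq (Aᵀ *ᵥ u) = vnormSq (Ap *ᵥ (A *ᵥ (Aᵀ *ᵥ u))) := by rw [key]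
    _ ≤ matSpectralNorm Ap ^ 2 * vnormSq (A *ᵥ (Aᵀ *ᵥ u)) := mulVec_vnormSq_le _ _

lemma vnormSq_add_smul {k : ℕ} (y a : Fin k → ℝ) (c : ℝ) :
    vnormSq (y + c • a) = vnormSq y + 2 * c * (a ⬝ᵥ y) + c ^ 2 * vnormSq a := by
  simp only [vnormSq_eq_dot, dotProduct_add, add_dotProduct, smul_dotProduct,
    dotProduct_smul, dotProduct_comm a y, smul_eq_mul]
  ring

lemma rkStep_err {n d : ℕ} (A : Matrix (Fin n) (Fin d) ℝ) (b : Fin n → ℝ) (i : Fin n)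
    (hA : A i ≠ 0) (x xstar : Fin d → ℝ) :
    vnormSq (rkStep A b i x - xstar)
      = vnormSq (x - xstar) - (A i ⬝ᵥ (x - xstar)) ^ 2 / vnormSq (A i)
        + (b i - A i ⬝ᵥ xstar) ^ 2 / vnormSq (A i) := by
  have hs : vnormSq (A i) ≠ 0 := (vnormSq_pos hA).ne'
  have h1 : rkStep A b i x - xstar
      = (x - xstar) + ((b i - A i ⬝ᵥ x) / vnormSq (A i)) • A i := by
    unfold rkStep; abel
  rw [h1, vnormSq_add_smul]
  have h2 : A i ⬝ᵥ x = A i ⬝ᵥ (x - xstar) + A i ⬝ᵥ xstar := by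
    rw [dotProduct_sub]; ring
  rw [h2]
  field_simp
  ring

lemma rowProb_nonneg {n d : ℕ} (A : Matrix (Fin n) (Fin d) ℝ) (i : Fin n) : 0 ≤ rowProb A i :=
  div_nonneg (vnormSq_nonneg _) (frobSq_nonneg A)

lemma sum_rowProb {n d : ℕ} {A : Matrix (Fin n) (Fin d) ℝ} (hF : frobSq A ≠ 0) :
    ∑ i, rowProb A i = 1 := by
  simp only [rowProb, ← Finset.sum_div]
  rw [← frobSq, div_self hF]

lemma vnormSq_residual {n d : ℕ} (A : Matrix (Fin n) (Fin d) ℝ) (b : Fin n → ℝ) (x : Fin d → ℝ) :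
    vnormSq (b - A *ᵥ x) = ∑ i, (b i - A i ⬝ᵥ x) ^ 2 := by
  simp [vnormSq, Matrix.mulVec]

lemma expected_step {n d : ℕ} {A : Matrix (Fin n) (Fin d) ℝ} (b : Fin n → ℝ)
    (hrows : ∀ i, A i ≠ 0) (hF : frobSq A ≠ 0) (x xstar : Fin d → ℝ) :
    ∑ i, rowProb A i * vnormSq (rkStep A b i x - xstar)
      = vnormSq (x - xstar) - vnormSq (A *ᵥ (x - xstar)) / frobSq A
        + vnormSq (b - A *ᵥ xstar) / frobSq A := by
  have h1 : ∀ i : Fin n, rowProb A i * vnormSq (rkStep A b i x - xstar)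
      = (vnormSq (A i) * vnormSq (x - xstar) - (A i ⬝ᵥ (x - xstar)) ^ 2
          + (b i - A i ⬝ᵥ xstar) ^ 2) / frobSq A := by
    intro i
    have hs : vnormSq (A i) ≠ 0 := (vnormSq_pos (hrows i)).ne'
    rw [rkStep_err A b i (hrows i), rowProb]
    field_simp
  rw [Finset.sum_congr rfl (fun i _ => h1 i), ← Finset.sum_div]
  have h2 : ∑ i, (vnormSq (A i) * vnormSq (x - xstar) - (A i ⬝ᵥ (x - xstar)) ^ 2
        + (b i - A i ⬝ᵥ xstar) ^ 2)
      = frobSq A * vnormSq (x - xstar) - vnormSq (A *ᵥ (x - xstar)) + vnormSq (b - A *ᵥ xstar) := by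
    rw [Finset.sum_add_distrib, Finset.sum_sub_distrib, ← Finset.sum_mul, vnormSq_mulVec,
      vnormSq_residual, frobSq]
  rw [h2]
  field_simp

lemma pathWeight_nonneg {n d T : ℕ} (A : Matrix (Fin n) (Fin d) ℝ) (ω : Fin T → Fin n) :
    0 ≤ pathWeight A ω :=
  Finset.prod_nonneg fun t _ => rowProb_nonneg A (ω t)

lemma pathWeight_snoc {n d r : ℕ} (A : Matrix (Fin n) (Fin d) ℝ) (ω : Fin r → Fin n) (i : Fin n) :
    pathWeight A (Fin.snoc ω i) = pathWeight A ω * rowProb A i := by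
  unfold pathWeight
  rw [Fin.prod_univ_castSucc]
  simp

lemma sum_snoc {n r : ℕ} (f : (Fin (r + 1) → Fin n) → ℝ) :
    ∑ ω : Fin (r + 1) → Fin n, f ω = ∑ ω : Fin r → Fin n, ∑ i, f (Fin.snoc ω i) := by
  rw [← Equiv.sum_comp (Fin.snocEquiv (fun _ => Fin n)) f, Fintype.sum_prod_type]
  rw [Finset.sum_comm]
  rfl

lemma sum_pathWeight {n d : ℕ} {A : Matrix (Fin n) (Fin d) ℝ} (hF : frobSq A ≠ 0) :
    ∀ T : ℕ, ∑ ω : Fin T → Fin n, pathWeight A ω = 1 := by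
  intro T
  induction T with
  | zero => simp [pathWeight]
  | succ T ih =>
    rw [sum_snoc]
    have : ∀ ω : Fin T → Fin n, ∑ i, pathWeight A (Fin.snoc ω i) = pathWeight A ω := by
      intro ω
      simp only [pathWeight_snoc, ← Finset.mul_sum, sum_rowProb hF, mul_one]
    rw [Finset.sum_congr rfl fun ω _ => this ω, ih]

lemma rkSeq_congr {n d : ℕ} (A : Matrix (Fin n) (Fin d) ℝ) (b : Fin n → ℝ) (x0 : Fin d → ℝ)
    {ω ω' : ℕ → Fin n} (t : ℕ) (h : ∀ s < t, ω s = ω' s) :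
    rkSeq A b x0 ω t = rkSeq A b x0 ω' t := by
  induction t with
  | zero => rfl
  | succ t ih =>
    show rkStep A b (ω t) _ = rkStep A b (ω' t) _
    rw [ih fun s hs => h s (hs.trans (Nat.lt_succ_self t)), h t (Nat.lt_succ_self t)]

lemma extendPath_snoc_lt {n r : ℕ} [NeZero n] (ω : Fin r → Fin n) (i : Fin n) {s : ℕ}
    (hs : s < r) : extendPath (Fin.snoc ω i) s = extendPath ω s := by
  have hs' : s < r + 1 := hs.trans (Nat.lt_succ_self r)
  rw [extendPath, extendPath, dif_pos hs, dif_pos hs']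
  have : (⟨s, hs'⟩ : Fin (r + 1)) = Fin.castSucc ⟨s, hs⟩ := rfl
  rw [this, Fin.snoc_castSucc]

lemma extendPath_snoc_last {n r : ℕ} [NeZero n] (ω : Fin r → Fin n) (i : Fin n) :
    extendPath (Fin.snoc ω i) r = i := by
  rw [extendPath, dif_pos (Nat.lt_succ_self r)]
  exact Fin.snoc_last ..

lemma rkSeq_rowspace {n d : ℕ} {A : Matrix (Fin n) (Fin d) ℝ} (b : Fin n → ℝ)
    {x0 xstar : Fin d → ℝ} (h0 : inRowSpace A (x0 - xstar)) (ω : ℕ → Fin n) (t : ℕ) :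
    inRowSpace A (rkSeq A b x0 ω t - xstar) := by
  induction t with
  | zero => exact h0
  | succ t ih =>
    have hstep : rkSeq A b x0 ω (t + 1) - xstar
        = (rkSeq A b x0 ω t - xstar)
          + ((b (ω t) - A (ω t) ⬝ᵥ rkSeq A b x0 ω t) / vnormSq (A (ω t))) • A (ω t) := by
      show rkStep A b (ω t) (rkSeq A b x0 ω t) - xstar = _
      unfold rkStep; abel
    rw [hstep]
    exact inRowSpace_add_smul ih _ _

/-- mean square error of the RK iterates:
E‖x_r - x⋆‖² ≤ (1 - κ_dem⁻²)^r ‖x_0 - x⋆‖² + ‖A⁺‖² ‖b - Ax⋆‖², assuming x_0 ∈ range(Aᵀ). -/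
theorem rk_mse_bound {n d : ℕ} [NeZero n]
    (A : Matrix (Fin n) (Fin d) ℝ) (b : Fin n → ℝ) (hrows : ∀ i, A i ≠ 0)
    (Ap : Matrix (Fin d) (Fin n) ℝ) (hAp : IsMoorePenrose A Ap)
    (xstar : Fin d → ℝ) (hx : xstar = Ap *ᵥ b)
    (x0 : Fin d → ℝ) (h0 : inRowSpace A x0) (r : ℕ) :
    ∑ ω : Fin r → Fin n, pathWeight A ω * vnormSq (rkSeq A b x0 (extendPath ω) r - xstar)
      ≤ (1 - (kdem A Ap ^ 2)⁻¹) ^ r * vnormSq (x0 - xstar)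
        + matSpectralNorm Ap ^ 2 * vnormSq (b - A *ᵥ xstar) := by
  have hF : 0 < frobSq A :=
    Finset.sum_pos' (fun i _ => vnormSq_nonneg _)
      ⟨0, Finset.mem_univ _, vnormSq_pos (hrows 0)⟩
  set S : ℝ := matSpectralNorm Ap ^ 2 with hSdef
  set F : ℝ := frobSq A with hFdef
  have hK2 : kdem A Ap ^ 2 = S * F := by
    rw [kdem, mul_pow, Real.sq_sqrt (frobSq_nonneg A)]
  have h1K2 : 1 ≤ S * F := by
    have hr0 : inRowSpace A (A 0) := ⟨Pi.single 0 1, row_inRowSpace A 0⟩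
    have h1 := rowspace_bound hAp hr0
    have h2 := mulVec_le_frob A (A 0)
    have h3 : 0 < vnormSq (A 0) := vnormSq_pos (hrows 0)
    have hS0 : 0 ≤ S := sq_nonneg _
    nlinarith [vnormSq_nonneg (A *ᵥ A 0)]
  have hSF : 0 < S * F := lt_of_lt_of_le one_pos h1K2
  have hS : 0 < S := by nlinarith
  set q : ℝ := 1 - (kdem A Ap ^ 2)⁻¹ with hqdef
  have hq : q = 1 - (S * F)⁻¹ := by rw [hqdef, hK2]
  have hq0 : 0 ≤ q := by
    have hinv : (S * F)⁻¹ ≤ 1 := by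
      rw [← one_div]; exact (div_le_one hSF).mpr h1K2
    rw [hq]; linarith
  set C : ℝ := vnormSq (b - A *ᵥ xstar) / F with hCdef
  have hC0 : 0 ≤ C := div_nonneg (vnormSq_nonneg _) hF.le
  -- error vector stays in the row space
  have hx0r : inRowSpace A (x0 - xstar) :=
    inRowSpace_sub h0 (hx ▸ xstar_inRowSpace hAp b)
  -- one-step conditional bound
  have step_bound : ∀ x : Fin d → ℝ, inRowSpace A (x - xstar) →
      ∑ i, rowProb A i * vnormSq (rkStep A b i x - xstar) ≤ q * vnormSq (x - xstar) + C := by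
    intro x hxr
    rw [expected_step b hrows hF.ne' x xstar]
    have hrb := rowspace_bound hAp hxr
    have hkey : (S * F)⁻¹ * vnormSq (x - xstar) ≤ vnormSq (A *ᵥ (x - xstar)) / F := by
      rw [inv_mul_eq_div, div_le_div_iff₀ hSF hF]
      rw [← hSdef] at hrb
      nlinarith [mul_le_mul_of_nonneg_right hrb hF.le]
    rw [hq]
    have : vnormSq (x - xstar) - vnormSq (A *ᵥ (x - xstar)) / F
        ≤ (1 - (S * F)⁻¹) * vnormSq (x - xstar) := by nlinarith
    linarith
  -- main induction
  set D : ℝ := vnormSq (x0 - xstar) with hDdef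
  have key : ∀ r : ℕ,
      (∑ ω : Fin r → Fin n, pathWeight A ω * vnormSq (rkSeq A b x0 (extendPath ω) r - xstar))
      ≤ q ^ r * D + C * ∑ s ∈ Finset.range r, q ^ s := by
    intro r
    induction r with
    | zero => simp [pathWeight, rkSeq, hDdef]
    | succ r ih =>
      rw [sum_snoc]
      have hpoint : ∀ ω : Fin r → Fin n,
          ∑ i, pathWeight A (Fin.snoc ω i)
              * vnormSq (rkSeq A b x0 (extendPath (Fin.snoc ω i)) (r + 1) - xstar)
          = pathWeight A ω * ∑ i, rowProb A i
              * vnormSq (rkStep A b i (rkSeq A b x0 (extendPath ω) r) - xstar) := by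
        intro ω
        rw [Finset.mul_sum]
        refine Finset.sum_congr rfl fun i _ => ?_
        rw [pathWeight_snoc]
        have h1 : rkSeq A b x0 (extendPath (Fin.snoc ω i)) (r + 1)
            = rkStep A b i (rkSeq A b x0 (extendPath ω) r) := by
          show rkStep A b (extendPath (Fin.snoc ω i) r)
              (rkSeq A b x0 (extendPath (Fin.snoc ω i)) r) = _
          rw [extendPath_snoc_last,
            rkSeq_congr A b x0 r (fun s hs => extendPath_snoc_lt ω i hs)]
        rw [h1]; ring
      rw [Finset.sum_congr rfl fun ω _ => hpoint ω]
      have hb : ∀ ω : Fin r → Fin n,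
          pathWeight A ω * ∑ i, rowProb A i
              * vnormSq (rkStep A b i (rkSeq A b x0 (extendPath ω) r) - xstar)
          ≤ pathWeight A ω
              * (q * vnormSq (rkSeq A b x0 (extendPath ω) r - xstar) + C) := fun ω =>
        mul_le_mul_of_nonneg_left
          (step_bound _ (rkSeq_rowspace b hx0r (extendPath ω) r)) (pathWeight_nonneg A ω)
      calc ∑ ω : Fin r → Fin n, pathWeight A ω * ∑ i, rowProb A i
              * vnormSq (rkStep A b i (rkSeq A b x0 (extendPath ω) r) - xstar)
          ≤ ∑ ω : Fin r → Fin n, pathWeight A ω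
              * (q * vnormSq (rkSeq A b x0 (extendPath ω) r - xstar) + C) :=
            Finset.sum_le_sum fun ω _ => hb ω
        _ = q * (∑ ω : Fin r → Fin n,
              pathWeight A ω * vnormSq (rkSeq A b x0 (extendPath ω) r - xstar))
            + C * ∑ ω : Fin r → Fin n, pathWeight A ω := by
            rw [Finset.mul_sum, Finset.mul_sum, ← Finset.sum_add_distrib]
            refine Finset.sum_congr rfl fun ω _ => ?_
            ring
        _ ≤ q * (q ^ r * D + C * ∑ s ∈ Finset.range r, q ^ s) + C * 1 := by
            rw [sum_pathWeight hF.ne' r]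
            exact add_le_add_left (mul_le_mul_of_nonneg_left ih hq0) _
        _ = q ^ (r + 1) * D + C * ∑ s ∈ Finset.range (r + 1), q ^ s := by
            rw [geom_sum_succ]
            ring
  -- geometric series bound
  have hgeom : (∑ s ∈ Finset.range r, q ^ s) ≤ S * F := by
    have hg := geom_sum_mul q r
    have hqr : 0 ≤ q ^ r := pow_nonneg hq0 r
    have h2 : (∑ s ∈ Finset.range r, q ^ s) * (S * F)⁻¹ ≤ 1 := by
      have h1q : q - 1 = -(S * F)⁻¹ := by rw [hq]; ring
      rw [h1q] at hg
      linarith [hg, hqr]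
    calc (∑ s ∈ Finset.range r, q ^ s)
        = (∑ s ∈ Finset.range r, q ^ s) * (S * F)⁻¹ * (S * F) := by
          field_simp
      _ ≤ 1 * (S * F) := mul_le_mul_of_nonneg_right h2 hSF.le
      _ = S * F := one_mul _
  have hCS : C * (S * F) = S * vnormSq (b - A *ᵥ xstar) := by
    rw [hCdef]; field_simp
  calc ∑ ω : Fin r → Fin n, pathWeight A ω * vnormSq (rkSeq A b x0 (extendPath ω) r - xstar)
      ≤ q ^ r * D + C * ∑ s ∈ Finset.range r, q ^ s := key r
    _ ≤ q ^ r * D + C * (S * F) := by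
        exact add_le_add_right (mul_le_mul_of_nonneg_left hgeom hC0) _
    _ = q ^ r * D + S * vnormSq (b - A *ᵥ xstar) := by rw [hCS]
end
end

section
/- Assume x_0 ∈ range(A^T). For the randomized Kaczmarz iterates with r ≤ s, the cross-correlation satisfies E[(x_r - x_star)^T (x_s - x_star)] ≤ (1 - κ_dem^{-2})^s ||x_0 - x_star||^2 + (1 - κ_dem^{-2})^{s-r} ||A^+||^2 ||b - A x_star||^2. -/
open Matrix Finset
noncomputable section

namespace RK
open Matrix Finset

variable {n d : ℕ}

lemma vnormSq_nonneg (x : Fin d → ℝ) : 0 ≤ vnormSq x :=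
  Finset.sum_nonneg fun _ _ => sq_nonneg _

lemma dotProduct_self_eq (x : Fin d → ℝ) : x ⬝ᵥ x = vnormSq x := by
  simp [dotProduct, vnormSq, sq]

lemma vnormSq_pos {x : Fin d → ℝ} (hx : x ≠ 0) : 0 < vnormSq x := by
  obtain ⟨i, hi⟩ := Function.ne_iff.1 hx
  exact Finset.sum_pos' (fun _ _ => sq_nonneg _)
    ⟨i, Finset.mem_univ i, lt_of_le_of_ne (sq_nonneg _) (Ne.symm (pow_ne_zero 2 hi))⟩

lemma frobSq_nonneg (A : Matrix (Fin n) (Fin d) ℝ) : 0 ≤ frobSq A :=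
  Finset.sum_nonneg fun _ _ => vnormSq_nonneg _

lemma frobSq_pos [NeZero n] {A : Matrix (Fin n) (Fin d) ℝ} (hrows : ∀ i, A i ≠ 0) :
    0 < frobSq A :=
  Finset.sum_pos' (fun _ _ => vnormSq_nonneg _)
    ⟨0, Finset.mem_univ _, vnormSq_pos (hrows 0)⟩

lemma rowProb_nonneg (A : Matrix (Fin n) (Fin d) ℝ) (i : Fin n) : 0 ≤ rowProb A i :=
  div_nonneg (vnormSq_nonneg _) (frobSq_nonneg _)

lemma pathWeight_nonneg {T : ℕ} (A : Matrix (Fin n) (Fin d) ℝ) (ω : Fin T → Fin n) :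
    0 ≤ pathWeight A ω :=
  Finset.prod_nonneg fun _ _ => rowProb_nonneg _ _

lemma rowProb_sum {A : Matrix (Fin n) (Fin d) ℝ} (hF : 0 < frobSq A) :
    ∑ i, rowProb A i = 1 := by
  simp only [rowProb, ← Finset.sum_div]
  exact div_self hF.ne'

lemma dp_le_sqrt (x y : Fin d → ℝ) : x ⬝ᵥ y ≤ Real.sqrt (vnormSq x * vnormSq y) := by
  have h := Finset.sum_mul_sq_le_sq_mul_sq Finset.univ x y
  calc x ⬝ᵥ y ≤ |x ⬝ᵥ y| := le_abs_self _
    _ = Real.sqrt ((x ⬝ᵥ y) ^ 2) := (Real.sqrt_sq_eq_abs _).symm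
    _ ≤ Real.sqrt (vnormSq x * vnormSq y) := Real.sqrt_le_sqrt (by
        simpa [dotProduct, vnormSq] using h)

lemma vnormSq_eq_norm_sq (x : Fin d → ℝ) :
    vnormSq x = ‖(WithLp.equiv 2 (Fin d → ℝ)).symm x‖ ^ 2 := by
  rw [EuclideanSpace.norm_eq, Real.sq_sqrt (by positivity)]
  simp [vnormSq, sq_abs]

lemma mulVec_vnormSq_le (M : Matrix (Fin n) (Fin d) ℝ) (x : Fin d → ℝ) :
    vnormSq (M *ᵥ x) ≤ matSpectralNorm M ^ 2 * vnormSq x := by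
  have h := ContinuousLinearMap.le_opNorm
    (LinearMap.toContinuousLinearMap (Matrix.toEuclideanLin M))
    ((WithLp.equiv 2 (Fin d → ℝ)).symm x)
  have happ : (Matrix.toEuclideanLin M) ((WithLp.equiv 2 (Fin d → ℝ)).symm x)
      = (WithLp.equiv 2 (Fin n → ℝ)).symm (M *ᵥ x) := by
    simp [Matrix.toEuclideanLin_apply]
  rw [LinearMap.coe_toContinuousLinearMap'] at h
  rw [happ] at h
  rw [vnormSq_eq_norm_sq, vnormSq_eq_norm_sq x]
  calc ‖(WithLp.equiv 2 (Fin n → ℝ)).symm (M *ᵥ x)‖ ^ 2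
      ≤ (matSpectralNorm M * ‖(WithLp.equiv 2 (Fin d → ℝ)).symm x‖) ^ 2 := by
        apply pow_le_pow_left₀ (norm_nonneg _) h
    _ = matSpectralNorm M ^ 2 * ‖(WithLp.equiv 2 (Fin d → ℝ)).symm x‖ ^ 2 := by ring

lemma transpose_mulVec_eq (A : Matrix (Fin n) (Fin d) ℝ) (v : Fin n → ℝ) :
    Aᵀ *ᵥ v = ∑ i, v i • A i := by
  funext j
  rw [Finset.sum_apply]
  simp [Matrix.mulVec, dotProduct, Matrix.transpose_apply, mul_comm]

lemma inRowSpace_row (A : Matrix (Fin n) (Fin d) ℝ) (i : Fin n) : inRowSpace A (A i) := by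
  refine ⟨Pi.single i 1, ?_⟩
  rw [transpose_mulVec_eq]
  rw [Finset.sum_eq_single i]
  · simp
  · intro b _ hb; simp [Pi.single_eq_of_ne hb]
  · simp

lemma inRowSpace_add {A : Matrix (Fin n) (Fin d) ℝ} {x y : Fin d → ℝ}
    (hx : inRowSpace A x) (hy : inRowSpace A y) : inRowSpace A (x + y) := by
  obtain ⟨u, rfl⟩ := hx; obtain ⟨v, rfl⟩ := hy
  exact ⟨u + v, (Matrix.mulVec_add _ _ _).symm⟩

lemma inRowSpace_smul {A : Matrix (Fin n) (Fin d) ℝ} {x : Fin d → ℝ} (c : ℝ)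
    (hx : inRowSpace A x) : inRowSpace A (c • x) := by
  obtain ⟨u, rfl⟩ := hx
  exact ⟨c • u, (Matrix.mulVec_smul _ _ _).symm⟩

lemma inRowSpace_sub {A : Matrix (Fin n) (Fin d) ℝ} {x y : Fin d → ℝ}
    (hx : inRowSpace A x) (hy : inRowSpace A y) : inRowSpace A (x - y) := by
  rw [sub_eq_add_neg]
  exact inRowSpace_add hx (by simpa using inRowSpace_smul (-1) hy)

section MP
variable {A : Matrix (Fin n) (Fin d) ℝ} {Ap : Matrix (Fin d) (Fin n) ℝ}
  (hAp : IsMoorePenrose A Ap)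
include hAp

lemma ApA_transposeMul : (Ap * A) * Aᵀ = Aᵀ := by
  calc (Ap * A) * Aᵀ = (Ap * A)ᵀ * Aᵀ := by rw [hAp.2.2.2]
    _ = (A * (Ap * A))ᵀ := (Matrix.transpose_mul _ _).symm
    _ = (A * Ap * A)ᵀ := by rw [← Matrix.mul_assoc]
    _ = Aᵀ := by rw [hAp.1]

lemma transposeMul_AAp : Aᵀ * (A * Ap) = Aᵀ := by
  calc Aᵀ * (A * Ap) = Aᵀ * (A * Ap)ᵀ := by rw [hAp.2.2.1]
    _ = ((A * Ap) * A)ᵀ := (Matrix.transpose_mul _ _).symm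
    _ = Aᵀ := by rw [hAp.1]

lemma inRowSpace_xstar (b : Fin n → ℝ) : inRowSpace A (Ap *ᵥ b) := by
  refine ⟨(Apᵀ * Ap) *ᵥ b, ?_⟩
  rw [Matrix.mulVec_mulVec]
  have hA : Ap = Aᵀ * (Apᵀ * Ap) :=
    calc Ap = Ap * A * Ap := hAp.2.1.symm
    _ = (Ap * A)ᵀ * Ap := by rw [hAp.2.2.2]
    _ = Aᵀ * Apᵀ * Ap := by rw [Matrix.transpose_mul]
    _ = Aᵀ * (Apᵀ * Ap) := by rw [Matrix.mul_assoc]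
  conv_lhs => rw [hA]

lemma rowspace_norm_le {x : Fin d → ℝ} (hx : inRowSpace A x) :
    vnormSq x ≤ matSpectralNorm Ap ^ 2 * vnormSq (A *ᵥ x) := by
  obtain ⟨u, rfl⟩ := hx
  have key : Ap *ᵥ (A *ᵥ (Aᵀ *ᵥ u)) = Aᵀ *ᵥ u := by
    rw [Matrix.mulVec_mulVec, Matrix.mulVec_mulVec, ApA_transposeMul hAp]
  calc vnormSq (Aᵀ *ᵥ u) = vnormSq (Ap *ᵥ (A *ᵥ (Aᵀ *ᵥ u))) := by rw [key]
    _ ≤ matSpectralNorm Ap ^ 2 * vnormSq (A *ᵥ (Aᵀ *ᵥ u)) := mulVec_vnormSq_le _ _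

lemma Atz_eq_zero (b : Fin n → ℝ) : Aᵀ *ᵥ (b - A *ᵥ (Ap *ᵥ b)) = 0 := by
  rw [Matrix.mulVec_sub, Matrix.mulVec_mulVec, Matrix.mulVec_mulVec, Matrix.mul_assoc,
    transposeMul_AAp hAp, sub_self]

end MP

lemma mulVec_frob_le (A : Matrix (Fin n) (Fin d) ℝ) (x : Fin d → ℝ) :
    vnormSq (A *ᵥ x) ≤ frobSq A * vnormSq x := by
  have : ∀ i, (A i ⬝ᵥ x) ^ 2 ≤ vnormSq (A i) * vnormSq x := fun i => by
    simpa [dotProduct, vnormSq] using Finset.sum_mul_sq_le_sq_mul_sq Finset.univ (A i) x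
  calc vnormSq (A *ᵥ x) = ∑ i, (A i ⬝ᵥ x) ^ 2 := by simp [vnormSq, Matrix.mulVec]
    _ ≤ ∑ i, vnormSq (A i) * vnormSq x := Finset.sum_le_sum fun i _ => this i
    _ = frobSq A * vnormSq x := by rw [← Finset.sum_mul]; rfl
lemma spectralNorm_pos {A : Matrix (Fin n) (Fin d) ℝ} {Ap : Matrix (Fin d) (Fin n) ℝ}
    (hAp : IsMoorePenrose A Ap) (hA : A ≠ 0) : 0 < matSpectralNorm Ap := by
  rcases (norm_nonneg (LinearMap.toContinuousLinearMap (Matrix.toEuclideanLin Ap))).lt_or_eq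
    with h | h
  · exact h
  · exfalso
    have hC : LinearMap.toContinuousLinearMap (Matrix.toEuclideanLin Ap) = 0 :=
      norm_eq_zero.mp h.symm
    have hL : ∀ v, Matrix.toEuclideanLin Ap v = 0 := fun v => by
      have hv : (LinearMap.toContinuousLinearMap (Matrix.toEuclideanLin Ap)) v = 0 := by
        rw [hC]; rfl
      simpa using hv
    have hAp0 : Ap = 0 := Matrix.toEuclideanLin.injective (by
      rw [map_zero]; exact LinearMap.ext hL)
    apply hA
    calc A = A * Ap * A := hAp.1.symm
      _ = 0 := by rw [hAp0]; simp

lemma A_ne_zero [NeZero n] {A : Matrix (Fin n) (Fin d) ℝ} (hrows : ∀ i, A i ≠ 0) : A ≠ 0 := by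
  intro h
  exact hrows 0 (by rw [h]; rfl)

lemma one_le_kappa2 [NeZero n] {A : Matrix (Fin n) (Fin d) ℝ} {Ap : Matrix (Fin d) (Fin n) ℝ}
    (hrows : ∀ i, A i ≠ 0) (hAp : IsMoorePenrose A Ap) :
    1 ≤ matSpectralNorm Ap ^ 2 * frobSq A := by
  have h1 := rowspace_norm_le hAp (inRowSpace_row A 0)
  have h2 := mulVec_frob_le A (A 0)
  have h3 : 0 < vnormSq (A 0) := vnormSq_pos (hrows 0)
  have h4 : 0 ≤ matSpectralNorm Ap ^ 2 := sq_nonneg _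
  nlinarith [mul_le_mul_of_nonneg_left h2 h4]

lemma kdem_sq (A : Matrix (Fin n) (Fin d) ℝ) (Ap : Matrix (Fin d) (Fin n) ℝ) :
    kdem A Ap ^ 2 = matSpectralNorm Ap ^ 2 * frobSq A := by
  rw [kdem, mul_pow, Real.sq_sqrt (frobSq_nonneg A)]

lemma kacMat_transpose (A : Matrix (Fin n) (Fin d) ℝ) : (kacMat A)ᵀ = kacMat A := by
  simp [kacMat, Matrix.transpose_sub, Matrix.transpose_smul, Matrix.transpose_mul,
    Matrix.transpose_transpose, Matrix.transpose_one]

lemma kacMat_mulVec (A : Matrix (Fin n) (Fin d) ℝ) (x : Fin d → ℝ) :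
    kacMat A *ᵥ x = x - (frobSq A)⁻¹ • (Aᵀ *ᵥ (A *ᵥ x)) := by
  rw [kacMat, Matrix.sub_mulVec, Matrix.one_mulVec, Matrix.smul_mulVec,
    ← Matrix.mulVec_mulVec]

lemma kacMat_mem {A : Matrix (Fin n) (Fin d) ℝ} {x : Fin d → ℝ} (hx : inRowSpace A x) :
    inRowSpace A (kacMat A *ᵥ x) := by
  rw [kacMat_mulVec]
  exact inRowSpace_sub hx (inRowSpace_smul _ ⟨A *ᵥ x, rfl⟩)

lemma quad_eq (A : Matrix (Fin n) (Fin d) ℝ) (x : Fin d → ℝ) :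
    x ⬝ᵥ (kacMat A *ᵥ x) = vnormSq x - (frobSq A)⁻¹ * vnormSq (A *ᵥ x) := by
  rw [kacMat_mulVec, dotProduct_sub, dotProduct_smul, dotProduct_self_eq,
    Matrix.dotProduct_mulVec, Matrix.vecMul_transpose, dotProduct_self_eq]
  rfl

lemma quad_nonneg {A : Matrix (Fin n) (Fin d) ℝ} (hF : 0 < frobSq A) (x : Fin d → ℝ) :
    0 ≤ x ⬝ᵥ (kacMat A *ᵥ x) := by
  rw [quad_eq]
  have h := mulVec_frob_le A x
  have : (frobSq A)⁻¹ * vnormSq (A *ᵥ x) ≤ (frobSq A)⁻¹ * (frobSq A * vnormSq x) :=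
    mul_le_mul_of_nonneg_left h (by positivity)
  rw [← mul_assoc, inv_mul_cancel₀ hF.ne', one_mul] at this
  linarith

lemma quad_le {A : Matrix (Fin n) (Fin d) ℝ} {Ap : Matrix (Fin d) (Fin n) ℝ}
    (hAp : IsMoorePenrose A Ap) (hF : 0 < frobSq A) (hP : 0 < matSpectralNorm Ap)
    {x : Fin d → ℝ} (hx : inRowSpace A x) :
    x ⬝ᵥ (kacMat A *ᵥ x) ≤ (1 - (matSpectralNorm Ap ^ 2 * frobSq A)⁻¹) * vnormSq x := by
  rw [quad_eq]
  have h1 := rowspace_norm_le hAp hx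
  have key : (matSpectralNorm Ap ^ 2 * frobSq A)⁻¹ * vnormSq x ≤ (frobSq A)⁻¹ * vnormSq (A *ᵥ x) := by
    have h2 : (matSpectralNorm Ap ^ 2 * frobSq A)⁻¹ * vnormSq x
        ≤ (matSpectralNorm Ap ^ 2 * frobSq A)⁻¹ * (matSpectralNorm Ap ^ 2 * vnormSq (A *ᵥ x)) :=
      mul_le_mul_of_nonneg_left h1 (by positivity)
    have h3 : (matSpectralNorm Ap ^ 2 * frobSq A)⁻¹ * (matSpectralNorm Ap ^ 2 * vnormSq (A *ᵥ x))
        = (frobSq A)⁻¹ * vnormSq (A *ᵥ x) := by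
      field_simp
    linarith [h2, h3.symm.le, h3.le]
  linarith [key]
lemma vnormSq_add (u v : Fin d → ℝ) :
    vnormSq (u + v) = vnormSq u + 2 * (u ⬝ᵥ v) + vnormSq v := by
  simp only [vnormSq, dotProduct, Pi.add_apply, Finset.mul_sum, ← Finset.sum_add_distrib]
  exact Finset.sum_congr rfl fun i _ => by ring

lemma vnormSq_smul (c : ℝ) (u : Fin d → ℝ) : vnormSq (c • u) = c ^ 2 * vnormSq u := by
  simp only [vnormSq, Pi.smul_apply, smul_eq_mul, Finset.mul_sum]
  exact Finset.sum_congr rfl fun i _ => by ring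

section Contract
variable {A : Matrix (Fin n) (Fin d) ℝ} {Ap : Matrix (Fin d) (Fin n) ℝ}

lemma quad_symm (A : Matrix (Fin n) (Fin d) ℝ) (u v : Fin d → ℝ) :
    v ⬝ᵥ (kacMat A *ᵥ u) = u ⬝ᵥ (kacMat A *ᵥ v) := by
  rw [Matrix.dotProduct_mulVec v, ← kacMat_transpose A, Matrix.vecMul_transpose,
    kacMat_transpose, dotProduct_comm]

lemma polar (hAp : IsMoorePenrose A Ap) (hF : 0 < frobSq A) (hP : 0 < matSpectralNorm Ap)
    {u v : Fin d → ℝ} (hu : inRowSpace A u) (hv : inRowSpace A v) :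
    4 * (u ⬝ᵥ (kacMat A *ᵥ v)) ≤ (1 - (matSpectralNorm Ap ^ 2 * frobSq A)⁻¹) * vnormSq (u + v) := by
  have hsum := quad_le hAp hF hP (inRowSpace_add hu hv)
  have hdiff := quad_nonneg hF (u - v)
  have e1 : (u + v) ⬝ᵥ (kacMat A *ᵥ (u + v))
      = u ⬝ᵥ (kacMat A *ᵥ u) + 2 * (u ⬝ᵥ (kacMat A *ᵥ v)) + v ⬝ᵥ (kacMat A *ᵥ v) := by
    rw [Matrix.mulVec_add, dotProduct_add, add_dotProduct, add_dotProduct,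
      quad_symm A u v]
    ring
  have e2 : (u - v) ⬝ᵥ (kacMat A *ᵥ (u - v))
      = u ⬝ᵥ (kacMat A *ᵥ u) - 2 * (u ⬝ᵥ (kacMat A *ᵥ v)) + v ⬝ᵥ (kacMat A *ᵥ v) := by
    rw [Matrix.mulVec_sub, dotProduct_sub, sub_dotProduct, sub_dotProduct,
      quad_symm A u v]
    ring
  linarith

lemma rho_nonneg (hk : 1 ≤ matSpectralNorm Ap ^ 2 * frobSq A) :
    0 ≤ 1 - (matSpectralNorm Ap ^ 2 * frobSq A)⁻¹ := by
  have h : (matSpectralNorm Ap ^ 2 * frobSq A)⁻¹ ≤ 1 := inv_le_one_of_one_le₀ hk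
  linarith

lemma kac_contract (hAp : IsMoorePenrose A Ap) (hF : 0 < frobSq A) (hP : 0 < matSpectralNorm Ap)
    (hk : 1 ≤ matSpectralNorm Ap ^ 2 * frobSq A)
    {x : Fin d → ℝ} (hx : inRowSpace A x) :
    vnormSq (kacMat A *ᵥ x) ≤ (1 - (matSpectralNorm Ap ^ 2 * frobSq A)⁻¹) ^ 2 * vnormSq x := by
  set ρ := 1 - (matSpectralNorm Ap ^ 2 * frobSq A)⁻¹ with hρ
  have hρ0 : 0 ≤ ρ := rho_nonneg hk
  set y := kacMat A *ᵥ x with hy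
  have hyR : inRowSpace A y := kacMat_mem hx
  have hN : 0 ≤ vnormSq y := vnormSq_nonneg y
  have hX : 0 ≤ vnormSq x := vnormSq_nonneg x
  rcases hN.eq_or_lt with h0 | hNpos
  · rw [← h0]
    positivity
  rcases hX.eq_or_lt with h0 | hXpos
  · exfalso
    have hx0 : x = 0 := by
      by_contra hne; exact (vnormSq_pos hne).ne' h0.symm
    have hy0 : y = 0 := by rw [hy, hx0, Matrix.mulVec_zero]
    rw [hy0] at hNpos
    simp [vnormSq] at hNpos
  set sx := Real.sqrt (vnormSq x) with hsx
  set sn := Real.sqrt (vnormSq y) with hsn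
  have hsx2 : sx ^ 2 = vnormSq x := Real.sq_sqrt hX
  have hsn2 : sn ^ 2 = vnormSq y := Real.sq_sqrt hN
  have hsxpos : 0 < sx := Real.sqrt_pos.mpr hXpos
  have hsnpos : 0 < sn := Real.sqrt_pos.mpr hNpos
  have hu : inRowSpace A (sn • x) := inRowSpace_smul _ hx
  have hv : inRowSpace A (sx • y) := inRowSpace_smul _ hyR
  have hpol := polar hAp hF hP hu hv
  -- compute the dot product in hpol
  have hd1 : (sn • x) ⬝ᵥ (kacMat A *ᵥ (sx • y)) = sn * sx * vnormSq y := by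
    rw [Matrix.mulVec_smul, smul_dotProduct, dotProduct_smul, smul_eq_mul, smul_eq_mul,
      quad_symm A y x, ← hy, dotProduct_self_eq]
    ring
  have hxy : x ⬝ᵥ y ≤ sx * sn := by
    have := dp_le_sqrt x y
    rwa [Real.sqrt_mul hX] at this
  have hnorm : vnormSq (sn • x + sx • y)
      ≤ 4 * (vnormSq x * vnormSq y) := by
    rw [vnormSq_add, vnormSq_smul, vnormSq_smul, smul_dotProduct, dotProduct_smul,
      smul_eq_mul, smul_eq_mul]
    have h2 : 2 * (sn * (sx * (x ⬝ᵥ y))) ≤ 2 * (sn * (sx * (sx * sn))) := by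
      have := mul_le_mul_of_nonneg_left hxy (by positivity : (0:ℝ) ≤ sx)
      nlinarith [hxy, hsxpos.le, hsnpos.le]
    nlinarith [hsx2, hsn2]
  have step1 : 4 * (sn * sx * vnormSq y) ≤ ρ * (4 * (vnormSq x * vnormSq y)) := by
    calc 4 * (sn * sx * vnormSq y) = 4 * ((sn • x) ⬝ᵥ (kacMat A *ᵥ (sx • y))) := by rw [hd1]
      _ ≤ ρ * vnormSq (sn • x + sx • y) := hpol
      _ ≤ ρ * (4 * (vnormSq x * vnormSq y)) := mul_le_mul_of_nonneg_left hnorm hρ0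
  have step2 : sn * sx ≤ ρ * vnormSq x := by
    have h4 : (sn * sx) * vnormSq y ≤ (ρ * vnormSq x) * vnormSq y := by nlinarith [step1]
    exact le_of_mul_le_mul_right h4 hNpos
  have step3 : sn ≤ ρ * sx := by
    have : sn * sx ≤ (ρ * sx) * sx := by nlinarith [step2, hsx2]
    exact le_of_mul_le_mul_right this hsxpos
  calc vnormSq y = sn ^ 2 := hsn2.symm
    _ ≤ (ρ * sx) ^ 2 := pow_le_pow_left₀ hsnpos.le step3 2
    _ = ρ ^ 2 * vnormSq x := by rw [mul_pow, hsx2]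

lemma kacMat_pow_mem {x : Fin d → ℝ} (k : ℕ) (hx : inRowSpace A x) :
    inRowSpace A ((kacMat A ^ k) *ᵥ x) := by
  induction k generalizing x with
  | zero => simpa [Matrix.one_mulVec] using hx
  | succ k ih =>
    rw [pow_succ, ← Matrix.mulVec_mulVec]
    exact ih (kacMat_mem hx)

lemma kac_pow_contract (hAp : IsMoorePenrose A Ap) (hF : 0 < frobSq A)
    (hP : 0 < matSpectralNorm Ap) (hk : 1 ≤ matSpectralNorm Ap ^ 2 * frobSq A)
    (k : ℕ) {x : Fin d → ℝ} (hx : inRowSpace A x) :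
    vnormSq ((kacMat A ^ k) *ᵥ x)
      ≤ ((1 - (matSpectralNorm Ap ^ 2 * frobSq A)⁻¹) ^ k) ^ 2 * vnormSq x := by
  induction k generalizing x with
  | zero => simp [Matrix.one_mulVec]
  | succ k ih =>
    rw [pow_succ, ← Matrix.mulVec_mulVec]
    calc vnormSq ((kacMat A ^ k) *ᵥ (kacMat A *ᵥ x))
        ≤ ((1 - (matSpectralNorm Ap ^ 2 * frobSq A)⁻¹) ^ k) ^ 2 * vnormSq (kacMat A *ᵥ x) :=
          ih (kacMat_mem hx)
      _ ≤ ((1 - (matSpectralNorm Ap ^ 2 * frobSq A)⁻¹) ^ k) ^ 2 *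
            ((1 - (matSpectralNorm Ap ^ 2 * frobSq A)⁻¹) ^ 2 * vnormSq x) := by
          apply mul_le_mul_of_nonneg_left (kac_contract hAp hF hP hk hx) (by positivity)
      _ = ((1 - (matSpectralNorm Ap ^ 2 * frobSq A)⁻¹) ^ (k + 1)) ^ 2 * vnormSq x := by ring

lemma quad_pow (hAp : IsMoorePenrose A Ap) (hF : 0 < frobSq A)
    (hP : 0 < matSpectralNorm Ap) (hk : 1 ≤ matSpectralNorm Ap ^ 2 * frobSq A)
    (k : ℕ) {x : Fin d → ℝ} (hx : inRowSpace A x) :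
    x ⬝ᵥ ((kacMat A ^ k) *ᵥ x)
      ≤ (1 - (matSpectralNorm Ap ^ 2 * frobSq A)⁻¹) ^ k * vnormSq x := by
  set ρ := 1 - (matSpectralNorm Ap ^ 2 * frobSq A)⁻¹ with hρ
  have hρ0 : 0 ≤ ρ := rho_nonneg hk
  have hX : 0 ≤ vnormSq x := vnormSq_nonneg x
  calc x ⬝ᵥ ((kacMat A ^ k) *ᵥ x)
      ≤ Real.sqrt (vnormSq x * vnormSq ((kacMat A ^ k) *ᵥ x)) := dp_le_sqrt _ _
    _ ≤ Real.sqrt (vnormSq x * ((ρ ^ k) ^ 2 * vnormSq x)) := by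
        apply Real.sqrt_le_sqrt
        exact mul_le_mul_of_nonneg_left (kac_pow_contract hAp hF hP hk k hx) hX
    _ = ρ ^ k * vnormSq x := by
        rw [show vnormSq x * ((ρ ^ k) ^ 2 * vnormSq x) = (ρ ^ k * vnormSq x) ^ 2 by ring]
        exact Real.sqrt_sq (by positivity)

end Contract
section Step
variable {A : Matrix (Fin n) (Fin d) ℝ} {Ap : Matrix (Fin d) (Fin n) ℝ} {b : Fin n → ℝ}
  {xstar : Fin d → ℝ}

lemma rkStep_err (hrow : A i ≠ 0) (x : Fin d → ℝ) :
    rkStep A b i x - xstar = (x - xstar) +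
      (((b - A *ᵥ xstar) i - A i ⬝ᵥ (x - xstar)) / vnormSq (A i)) • A i := by
  funext j
  simp only [rkStep, Pi.add_apply, Pi.sub_apply, Pi.smul_apply, smul_eq_mul,
    Matrix.mulVec, dotProduct_sub, dotProduct, mul_sub, Finset.sum_sub_distrib]
  ring

lemma rkStep_mem (hx : inRowSpace A (x - xstar)) (i : Fin n) :
    inRowSpace A (rkStep A b i x - xstar) := by
  have : rkStep A b i x - xstar = (x - xstar) + ((b i - A i ⬝ᵥ x) / vnormSq (A i)) • A i := by
    funext j; simp [rkStep]; ring
  rw [this]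
  exact inRowSpace_add hx (inRowSpace_smul _ (inRowSpace_row A i))

lemma vnormSq_add_smul (u w : Fin d → ℝ) (c : ℝ) :
    vnormSq (u + c • w) = vnormSq u + 2 * c * (w ⬝ᵥ u) + c ^ 2 * vnormSq w := by
  rw [vnormSq_add, vnormSq_smul, dotProduct_smul, smul_eq_mul, dotProduct_comm]
  ring

lemma mean_step (hrows : ∀ i, A i ≠ 0) (hF : 0 < frobSq A)
    (hz : Aᵀ *ᵥ (b - A *ᵥ xstar) = 0) (x : Fin d → ℝ) :
    ∑ i, rowProb A i • (rkStep A b i x - xstar) = kacMat A *ᵥ (x - xstar) := by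
  have hterm : ∀ i : Fin n, rowProb A i • (rkStep A b i x - xstar)
      = rowProb A i • (x - xstar) +
        (frobSq A)⁻¹ • (((b - A *ᵥ xstar) i - A i ⬝ᵥ (x - xstar)) • A i) := by
    intro i
    rw [rkStep_err (hrows i), smul_add, smul_smul, smul_smul]
    congr 2
    rw [rowProb]
    have hv : vnormSq (A i) ≠ 0 := (vnormSq_pos (hrows i)).ne'
    field_simp
  rw [Finset.sum_congr rfl fun i _ => hterm i, Finset.sum_add_distrib, ← Finset.sum_smul,
    rowProb_sum hF, one_smul, ← Finset.smul_sum]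
  have hsplit : ∑ i : Fin n, ((b - A *ᵥ xstar) i - A i ⬝ᵥ (x - xstar)) • A i
      = Aᵀ *ᵥ (b - A *ᵥ xstar) - Aᵀ *ᵥ (A *ᵥ (x - xstar)) := by
    rw [transpose_mulVec_eq, transpose_mulVec_eq, ← Finset.sum_sub_distrib]
    exact Finset.sum_congr rfl fun i _ => by rw [sub_smul]; rfl
  rw [hsplit, hz, zero_sub, kacMat_mulVec, smul_neg]
  abel

lemma mean_sq_step (hrows : ∀ i, A i ≠ 0) (hF : 0 < frobSq A) (x : Fin d → ℝ) :
    ∑ i, rowProb A i * vnormSq (rkStep A b i x - xstar)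
      = vnormSq (x - xstar) - (frobSq A)⁻¹ * vnormSq (A *ᵥ (x - xstar))
        + (frobSq A)⁻¹ * vnormSq (b - A *ᵥ xstar) := by
  have hterm : ∀ i : Fin n, rowProb A i * vnormSq (rkStep A b i x - xstar)
      = rowProb A i * vnormSq (x - xstar)
        + (frobSq A)⁻¹ * (((b - A *ᵥ xstar) i) ^ 2 - (A i ⬝ᵥ (x - xstar)) ^ 2) := by
    intro i
    have hv : vnormSq (A i) ≠ 0 := (vnormSq_pos (hrows i)).ne'
    rw [rkStep_err (hrows i), vnormSq_add_smul]
    have hwu : A i ⬝ᵥ (x - xstar) = A i ⬝ᵥ (x - xstar) := rfl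
    rw [rowProb]
    field_simp
    ring
  rw [Finset.sum_congr rfl fun i _ => hterm i, Finset.sum_add_distrib, ← Finset.sum_mul,
    rowProb_sum hF, one_mul, ← Finset.mul_sum, Finset.sum_sub_distrib]
  have h1 : ∑ i : Fin n, ((b - A *ᵥ xstar) i) ^ 2 = vnormSq (b - A *ᵥ xstar) := rfl
  have h2 : ∑ i : Fin n, (A i ⬝ᵥ (x - xstar)) ^ 2 = vnormSq (A *ᵥ (x - xstar)) := rfl
  rw [h1, h2]
  ring

end Step
section Seq
variable {A : Matrix (Fin n) (Fin d) ℝ} {Ap : Matrix (Fin d) (Fin n) ℝ} {b : Fin n → ℝ}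
  {xstar : Fin d → ℝ} {x : Fin d → ℝ}

lemma rkSeq_congr (x : Fin d → ℝ) {ω ω' : ℕ → Fin n} :
    ∀ t : ℕ, (∀ u < t, ω u = ω' u) → rkSeq A b x ω t = rkSeq A b x ω' t := by
  intro t
  induction t with
  | zero => intro _; rfl
  | succ t ih =>
    intro h
    show rkStep A b (ω t) _ = rkStep A b (ω' t) _
    rw [ih fun u hu => h u (hu.trans (Nat.lt_succ_self t)), h t (Nat.lt_succ_self t)]

lemma rkSeq_succ_shift (x : Fin d → ℝ) (ω : ℕ → Fin n) :
    ∀ k : ℕ, rkSeq A b x ω (k + 1) = rkSeq A b (rkStep A b (ω 0) x) (fun t => ω (t + 1)) k := by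
  intro k
  induction k with
  | zero => rfl
  | succ k ih =>
    show rkStep A b (ω (k + 1)) (rkSeq A b x ω (k + 1)) = _
    rw [ih]
    rfl

lemma rkSeq_add (x : Fin d → ℝ) (ω : ℕ → Fin n) (r : ℕ) :
    ∀ k : ℕ, rkSeq A b x ω (r + k) = rkSeq A b (rkSeq A b x ω r) (fun t => ω (r + t)) k := by
  intro k
  induction k with
  | zero => rfl
  | succ k ih =>
    show rkStep A b (ω (r + k)) (rkSeq A b x ω (r + k)) = _
    rw [ih]
    rfl

lemma rkSeq_mem (hx : inRowSpace A (x - xstar)) (ω : ℕ → Fin n) (t : ℕ) :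
    inRowSpace A (rkSeq A b x ω t - xstar) := by
  induction t with
  | zero => exact hx
  | succ t ih => exact rkStep_mem ih (ω t)

lemma extendPath_cons [NeZero n] {k : ℕ} (i : Fin n) (σ : Fin k → Fin n) (t : ℕ) (ht : t < k) :
    extendPath (Fin.cons i σ) (t + 1) = extendPath σ t := by
  have h1 : t + 1 < k + 1 := Nat.succ_lt_succ ht
  simp only [extendPath, dif_pos h1, dif_pos ht]
  have h : (⟨t + 1, h1⟩ : Fin (k + 1)) = Fin.succ ⟨t, ht⟩ := rfl
  rw [h, Fin.cons_succ]

lemma extendPath_cons_zero [NeZero n] {k : ℕ} (i : Fin n) (σ : Fin k → Fin n) :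
    extendPath (Fin.cons i σ) 0 = i := by
  simp [extendPath]

lemma pathWeight_cons {k : ℕ} (i : Fin n) (σ : Fin k → Fin n) :
    pathWeight A (Fin.cons i σ) = rowProb A i * pathWeight A σ := by
  rw [pathWeight, Fin.prod_univ_succ, Fin.cons_zero, pathWeight]
  exact congrArg (rowProb A i * ·)
    (Finset.prod_congr rfl fun t _ => by simp)

lemma rkSeq_cons [NeZero n] {k : ℕ} (i : Fin n) (σ : Fin k → Fin n) (x : Fin d → ℝ) :
    rkSeq A b x (extendPath (Fin.cons i σ)) (k + 1)
      = rkSeq A b (rkStep A b i x) (extendPath σ) k := by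
  rw [rkSeq_succ_shift, extendPath_cons_zero]
  all_goals exact rkSeq_congr _ k fun u hu => extendPath_cons i σ u hu

lemma exp_vec [NeZero n] (hrows : ∀ i, A i ≠ 0) (hF : 0 < frobSq A)
    (hz : Aᵀ *ᵥ (b - A *ᵥ xstar) = 0) :
    ∀ (k : ℕ) (x : Fin d → ℝ),
      ∑ σ : Fin k → Fin n, pathWeight A σ • (rkSeq A b x (extendPath σ) k - xstar)
        = (kacMat A ^ k) *ᵥ (x - xstar) := by
  intro k
  induction k with
  | zero =>
    intro x
    rw [Fintype.sum_unique]
    show pathWeight A (default : Fin 0 → Fin n) • (x - xstar) = _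
    simp [pathWeight, Matrix.one_mulVec]
  | succ k ih =>
    intro x
    calc ∑ σ : Fin (k+1) → Fin n, pathWeight A σ • (rkSeq A b x (extendPath σ) (k+1) - xstar)
        = ∑ p : Fin n × (Fin k → Fin n), rowProb A p.1 •
            (pathWeight A p.2 • (rkSeq A b (rkStep A b p.1 x) (extendPath p.2) k - xstar)) := by
          refine (Fintype.sum_equiv (Fin.consEquiv (fun _ : Fin (k+1) => Fin n)) _ _ ?_).symm
          rintro ⟨i, σ⟩
          have hc : (Fin.consEquiv (fun _ : Fin (k+1) => Fin n)) (i, σ) = Fin.cons i σ := rfl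
          rw [hc, pathWeight_cons, rkSeq_cons, mul_smul]
      _ = ∑ i, rowProb A i • ∑ σ : Fin k → Fin n,
            pathWeight A σ • (rkSeq A b (rkStep A b i x) (extendPath σ) k - xstar) := by
          rw [Fintype.sum_prod_type]
          exact Finset.sum_congr rfl fun i _ => by rw [Finset.smul_sum]
      _ = ∑ i, rowProb A i • ((kacMat A ^ k) *ᵥ (rkStep A b i x - xstar)) := by
          exact Finset.sum_congr rfl fun i _ => by rw [ih]
      _ = (kacMat A ^ k) *ᵥ (∑ i, rowProb A i • (rkStep A b i x - xstar)) := by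
          simp only [← Matrix.mulVecLin_apply, ← _root_.map_smul, ← map_sum]
      _ = (kacMat A ^ (k + 1)) *ᵥ (x - xstar) := by
          rw [mean_step hrows hF hz, Matrix.mulVec_mulVec, ← pow_succ]

lemma exp_sq [NeZero n] (hrows : ∀ i, A i ≠ 0) (hF : 0 < frobSq A)
    (hAp : IsMoorePenrose A Ap) (hP : 0 < matSpectralNorm Ap)
    (hk2 : 1 ≤ matSpectralNorm Ap ^ 2 * frobSq A) :
    ∀ (k : ℕ) (x : Fin d → ℝ), inRowSpace A (x - xstar) →
      ∑ σ : Fin k → Fin n, pathWeight A σ * vnormSq (rkSeq A b x (extendPath σ) k - xstar)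
        ≤ (1 - (matSpectralNorm Ap ^ 2 * frobSq A)⁻¹) ^ k * vnormSq (x - xstar)
          + (∑ j ∈ Finset.range k, (1 - (matSpectralNorm Ap ^ 2 * frobSq A)⁻¹) ^ j) *
            ((frobSq A)⁻¹ * vnormSq (b - A *ᵥ xstar)) := by
  intro k
  induction k with
  | zero =>
    intro x _
    rw [Fintype.sum_unique]
    show pathWeight A (default : Fin 0 → Fin n) * vnormSq (x - xstar) ≤ _
    simp [pathWeight]
  | succ k ih =>
    intro x hx
    set ρ := 1 - (matSpectralNorm Ap ^ 2 * frobSq A)⁻¹ with hρdef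
    have hρ0 : 0 ≤ ρ := rho_nonneg hk2
    have heq : ∑ σ : Fin (k+1) → Fin n, pathWeight A σ * vnormSq (rkSeq A b x (extendPath σ) (k+1) - xstar)
        = ∑ i, rowProb A i * ∑ σ : Fin k → Fin n,
            pathWeight A σ * vnormSq (rkSeq A b (rkStep A b i x) (extendPath σ) k - xstar) := by
      calc ∑ σ : Fin (k+1) → Fin n, pathWeight A σ * vnormSq (rkSeq A b x (extendPath σ) (k+1) - xstar)
          = ∑ p : Fin n × (Fin k → Fin n), rowProb A p.1 *
              (pathWeight A p.2 * vnormSq (rkSeq A b (rkStep A b p.1 x) (extendPath p.2) k - xstar)) := by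
            refine (Fintype.sum_equiv (Fin.consEquiv (fun _ : Fin (k+1) => Fin n)) _ _ ?_).symm
            rintro ⟨i, σ⟩
            have hc : (Fin.consEquiv (fun _ : Fin (k+1) => Fin n)) (i, σ) = Fin.cons i σ := rfl
            rw [hc, pathWeight_cons, rkSeq_cons, mul_assoc]
        _ = ∑ i, rowProb A i * ∑ σ : Fin k → Fin n,
              pathWeight A σ * vnormSq (rkSeq A b (rkStep A b i x) (extendPath σ) k - xstar) := by
            rw [Fintype.sum_prod_type]
            exact Finset.sum_congr rfl fun i _ => by rw [Finset.mul_sum]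
    rw [heq]
    have hbound : ∀ i : Fin n, rowProb A i * ∑ σ : Fin k → Fin n,
          pathWeight A σ * vnormSq (rkSeq A b (rkStep A b i x) (extendPath σ) k - xstar)
        ≤ rowProb A i * (ρ ^ k * vnormSq (rkStep A b i x - xstar)
          + (∑ j ∈ Finset.range k, ρ ^ j) * ((frobSq A)⁻¹ * vnormSq (b - A *ᵥ xstar))) := fun i =>
      mul_le_mul_of_nonneg_left (ih (rkStep A b i x) (rkStep_mem hx i)) (rowProb_nonneg A i)
    calc ∑ i, rowProb A i * ∑ σ : Fin k → Fin n,
            pathWeight A σ * vnormSq (rkSeq A b (rkStep A b i x) (extendPath σ) k - xstar)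
        ≤ ∑ i, rowProb A i * (ρ ^ k * vnormSq (rkStep A b i x - xstar)
            + (∑ j ∈ Finset.range k, ρ ^ j) * ((frobSq A)⁻¹ * vnormSq (b - A *ᵥ xstar))) :=
          Finset.sum_le_sum fun i _ => hbound i
      _ = ρ ^ k * (∑ i, rowProb A i * vnormSq (rkStep A b i x - xstar))
            + (∑ j ∈ Finset.range k, ρ ^ j) * ((frobSq A)⁻¹ * vnormSq (b - A *ᵥ xstar)) := by
          rw [Finset.sum_congr rfl fun i (_ : i ∈ Finset.univ) => mul_add (rowProb A i) _ _,
            Finset.sum_add_distrib]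
          congr 1
          · rw [Finset.mul_sum]
            exact Finset.sum_congr rfl fun i _ => by ring
          · rw [← Finset.sum_mul, rowProb_sum hF, one_mul]
      _ ≤ ρ ^ k * (ρ * vnormSq (x - xstar) + (frobSq A)⁻¹ * vnormSq (b - A *ᵥ xstar))
            + (∑ j ∈ Finset.range k, ρ ^ j) * ((frobSq A)⁻¹ * vnormSq (b - A *ᵥ xstar)) := by
          have hms := mean_sq_step (xstar := xstar) (b := b) hrows hF x
          have hq : vnormSq (x - xstar) - (frobSq A)⁻¹ * vnormSq (A *ᵥ (x - xstar))
              ≤ ρ * vnormSq (x - xstar) := by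
            have := quad_le hAp hF hP hx
            rw [quad_eq] at this
            exact this
          have h1 : ∑ i, rowProb A i * vnormSq (rkStep A b i x - xstar)
              ≤ ρ * vnormSq (x - xstar) + (frobSq A)⁻¹ * vnormSq (b - A *ᵥ xstar) := by
            rw [hms]; linarith
          have := mul_le_mul_of_nonneg_left h1 (pow_nonneg hρ0 k)
          linarith
      _ ≤ ρ ^ (k+1) * vnormSq (x - xstar)
            + (∑ j ∈ Finset.range (k+1), ρ ^ j) * ((frobSq A)⁻¹ * vnormSq (b - A *ᵥ xstar)) := by
          rw [Finset.sum_range_succ]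
          have hnn : 0 ≤ (frobSq A)⁻¹ * vnormSq (b - A *ᵥ xstar) := by
            have := vnormSq_nonneg (b - A *ᵥ xstar)
            positivity
          rw [pow_succ]
          nlinarith [hnn]

end Seq
lemma geom_bound {P F : ℝ} (hk : 1 ≤ P * F) (k : ℕ) :
    ∑ j ∈ Finset.range k, (1 - (P * F)⁻¹) ^ j ≤ P * F := by
  have hPF : 0 < P * F := lt_of_lt_of_le one_pos hk
  set c := (P * F)⁻¹ with hc
  have hc0 : 0 < c := inv_pos.mpr hPF
  have hc1 : c ≤ 1 := inv_le_one_of_one_le₀ hk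
  have hρ0 : 0 ≤ 1 - c := by linarith
  have hmul : (∑ j ∈ Finset.range k, (1 - c) ^ j) * c = 1 - (1 - c) ^ k := by
    have := geom_sum_mul (1 - c) k
    -- (∑ (1-c)^i) * ((1-c) - 1) = (1-c)^k - 1
    have h2 : (∑ j ∈ Finset.range k, (1 - c) ^ j) * (-c) = (1 - c) ^ k - 1 := by
      calc (∑ j ∈ Finset.range k, (1 - c) ^ j) * (-c)
          = (∑ j ∈ Finset.range k, (1 - c) ^ j) * ((1 - c) - 1) := by ring_nf
        _ = (1 - c) ^ k - 1 := geom_sum_mul (1 - c) k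
    nlinarith [h2]
  have hpow : 0 ≤ (1 - c) ^ k := pow_nonneg hρ0 k
  have : (∑ j ∈ Finset.range k, (1 - c) ^ j) * c ≤ 1 := by rw [hmul]; linarith
  calc ∑ j ∈ Finset.range k, (1 - c) ^ j
      = ((∑ j ∈ Finset.range k, (1 - c) ^ j) * c) * c⁻¹ := by
        field_simp
    _ ≤ 1 * c⁻¹ := by
        apply mul_le_mul_of_nonneg_right this (by positivity)
    _ = P * F := by rw [one_mul, hc, inv_inv]

def pathSplit (n r k : ℕ) : ((Fin r → Fin n) × (Fin k → Fin n)) ≃ (Fin (r + k) → Fin n) where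
  toFun p u := if h : (u : ℕ) < r then p.1 ⟨u, h⟩ else p.2 ⟨(u : ℕ) - r, by omega⟩
  invFun ω := (fun a => ω ⟨a, by omega⟩, fun c => ω ⟨r + (c : ℕ), by omega⟩)
  left_inv p := by
    refine Prod.ext (funext fun a => ?_) (funext fun c => ?_)
    · simp only [dif_pos a.2]
    · have h : ¬ ((r + (c : ℕ)) < r) := by omega
      simp only [dif_neg h]
      congr 1
      ext
      simp
  right_inv ω := by
    funext u
    by_cases h : (u : ℕ) < r
    · simp only [dif_pos h]
    · simp only [dif_neg h]
      congr 1
      ext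
      simp
      omega

lemma pathSplit_lt {r k : ℕ} (p : (Fin r → Fin n) × (Fin k → Fin n)) (u : Fin (r + k))
    (h : (u : ℕ) < r) : pathSplit n r k p u = p.1 ⟨u, h⟩ := dif_pos h

lemma pathSplit_ge {r k : ℕ} (p : (Fin r → Fin n) × (Fin k → Fin n)) (u : Fin (r + k))
    (h : ¬ ((u : ℕ) < r)) : pathSplit n r k p u = p.2 ⟨(u : ℕ) - r, by omega⟩ := dif_neg h

lemma extendPath_pathSplit_lt [NeZero n] {r k : ℕ} (p : (Fin r → Fin n) × (Fin k → Fin n))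
    (u : ℕ) (h : u < r) : extendPath (pathSplit n r k p) u = extendPath p.1 u := by
  have h2 : u < r + k := by omega
  simp only [extendPath, dif_pos h, dif_pos h2]
  exact pathSplit_lt p ⟨u, h2⟩ h

lemma extendPath_pathSplit_ge [NeZero n] {r k : ℕ} (p : (Fin r → Fin n) × (Fin k → Fin n))
    (t : ℕ) (h : t < k) : extendPath (pathSplit n r k p) (r + t) = extendPath p.2 t := by
  have h2 : r + t < r + k := by omega
  simp only [extendPath, dif_pos h, dif_pos h2]
  have h3 : ¬ ((r + t) < r) := by omega
  rw [pathSplit_ge p ⟨r + t, h2⟩ h3]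
  congr 1
  ext
  simp
lemma pathWeight_pathSplit {r k : ℕ} (A : Matrix (Fin n) (Fin d) ℝ)
    (p : (Fin r → Fin n) × (Fin k → Fin n)) :
    pathWeight A (pathSplit n r k p) = pathWeight A p.1 * pathWeight A p.2 := by
  classical
  set g : ℕ → ℝ := fun m => if h : m < r then rowProb A (p.1 ⟨m, h⟩)
      else if h2 : m - r < k then rowProb A (p.2 ⟨m - r, h2⟩) else 1 with hg
  have h1 : pathWeight A (pathSplit n r k p) = ∏ u ∈ Finset.range (r + k), g u := by
    rw [pathWeight, ← Fin.prod_univ_eq_prod_range g (r + k)]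
    refine Finset.prod_congr rfl fun u _ => ?_
    by_cases h : (u : ℕ) < r
    · rw [pathSplit_lt p u h, hg]
      simp only [dif_pos h]
    · rw [pathSplit_ge p u h, hg]
      have h2 : (u : ℕ) - r < k := by omega
      simp only [dif_neg h, dif_pos h2]
  have h2 : pathWeight A p.1 = ∏ u ∈ Finset.range r, g u := by
    rw [pathWeight, ← Fin.prod_univ_eq_prod_range g r]
    refine Finset.prod_congr rfl fun u _ => ?_
    rw [hg]
    simp only [dif_pos u.2]
  have h3 : pathWeight A p.2 = ∏ u ∈ Finset.range k, g (r + u) := by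
    rw [pathWeight]
    rw [show (∏ u ∈ Finset.range k, g (r + u)) = ∏ u : Fin k, g (r + (u : ℕ)) from
      (Fin.prod_univ_eq_prod_range (fun m => g (r + m)) k).symm]
    refine Finset.prod_congr rfl fun u _ => ?_
    rw [hg]
    have ha : ¬ (r + (u : ℕ) < r) := by omega
    have hb : r + (u : ℕ) - r < k := by omega
    simp only [dif_neg ha, dif_pos hb]
    congr 1
    ext
    simp
  rw [h1, Finset.prod_range_add, ← h2, ← h3]

lemma dp_sum {ι : Type*} (s : Finset ι) (v : Fin d → ℝ) (w : ι → Fin d → ℝ) :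
    v ⬝ᵥ (∑ i ∈ s, w i) = ∑ i ∈ s, v ⬝ᵥ (w i) := by
  simp only [dotProduct, Finset.sum_apply, Finset.mul_sum]
  exact Finset.sum_comm
end RK

/-- cross-correlation bound for RK iterates, r ≤ s:
E[(x_r - x⋆)ᵀ(x_s - x⋆)] ≤ (1 - κ_dem⁻²)^s ‖x_0 - x⋆‖²
  + (1 - κ_dem⁻²)^{s-r} ‖A⁺‖² ‖b - Ax⋆‖². -/
theorem rk_cross_correlation {n d : ℕ} [NeZero n]
    (A : Matrix (Fin n) (Fin d) ℝ) (b : Fin n → ℝ) (hrows : ∀ i, A i ≠ 0)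
    (Ap : Matrix (Fin d) (Fin n) ℝ) (hAp : IsMoorePenrose A Ap)
    (xstar : Fin d → ℝ) (hx : xstar = Ap *ᵥ b)
    (x0 : Fin d → ℝ) (h0 : inRowSpace A x0) (r s : ℕ) (hrs : r ≤ s) :
    ∑ ω : Fin s → Fin n, pathWeight A ω *
        ((rkSeq A b x0 (extendPath ω) r - xstar) ⬝ᵥ (rkSeq A b x0 (extendPath ω) s - xstar))
      ≤ (1 - (kdem A Ap ^ 2)⁻¹) ^ s * vnormSq (x0 - xstar)
        + (1 - (kdem A Ap ^ 2)⁻¹) ^ (s - r) * (matSpectralNorm Ap ^ 2 * vnormSq (b - A *ᵥ xstar)) := by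
  classical
  obtain ⟨k, rfl⟩ : ∃ k, s = r + k := ⟨s - r, by omega⟩
  have hsr : r + k - r = k := by omega
  rw [hsr, RK.kdem_sq]
  have hF : 0 < frobSq A := RK.frobSq_pos hrows
  have hA0 : A ≠ 0 := RK.A_ne_zero hrows
  have hP : 0 < matSpectralNorm Ap := RK.spectralNorm_pos hAp hA0
  have hk2 : 1 ≤ matSpectralNorm Ap ^ 2 * frobSq A := RK.one_le_kappa2 hrows hAp
  have hρ0 : 0 ≤ 1 - (matSpectralNorm Ap ^ 2 * frobSq A)⁻¹ := RK.rho_nonneg hk2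
  have hz : Aᵀ *ᵥ (b - A *ᵥ xstar) = 0 := by rw [hx]; exact RK.Atz_eq_zero hAp b
  have hx0 : inRowSpace A (x0 - xstar) :=
    RK.inRowSpace_sub h0 (hx ▸ RK.inRowSpace_xstar hAp b)
  set ρ : ℝ := 1 - (matSpectralNorm Ap ^ 2 * frobSq A)⁻¹ with hρdef
  set Vz : ℝ := vnormSq (b - A *ᵥ xstar) with hVz
  have hVz0 : 0 ≤ Vz := RK.vnormSq_nonneg _
  -- reindex the sum over paths of length r + k
  have hsum : ∑ ω : Fin (r + k) → Fin n, pathWeight A ω *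
        ((rkSeq A b x0 (extendPath ω) r - xstar) ⬝ᵥ (rkSeq A b x0 (extendPath ω) (r + k) - xstar))
      = ∑ p : (Fin r → Fin n) × (Fin k → Fin n),
          (pathWeight A p.1 * pathWeight A p.2) *
            ((rkSeq A b x0 (extendPath p.1) r - xstar) ⬝ᵥ
              (rkSeq A b (rkSeq A b x0 (extendPath p.1) r) (extendPath p.2) k - xstar)) := by
    refine (Fintype.sum_equiv (RK.pathSplit n r k) _ _ ?_).symm
    intro p
    have h1 : rkSeq A b x0 (extendPath (RK.pathSplit n r k p)) r
        = rkSeq A b x0 (extendPath p.1) r :=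
      RK.rkSeq_congr _ r fun u hu => RK.extendPath_pathSplit_lt p u hu
    have h2 : rkSeq A b x0 (extendPath (RK.pathSplit n r k p)) (r + k)
        = rkSeq A b (rkSeq A b x0 (extendPath p.1) r) (extendPath p.2) k := by
      rw [RK.rkSeq_add x0 (extendPath (RK.pathSplit n r k p)) r k, h1]
      exact RK.rkSeq_congr _ k fun t ht => RK.extendPath_pathSplit_ge p t ht
    rw [RK.pathWeight_pathSplit A p, h1, h2]
  rw [hsum, Fintype.sum_prod_type]
  -- inner expectation over the last k steps
  have hinner : ∀ τ : Fin r → Fin n,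
      ∑ σ : Fin k → Fin n, (pathWeight A τ * pathWeight A σ) *
          ((rkSeq A b x0 (extendPath τ) r - xstar) ⬝ᵥ
            (rkSeq A b (rkSeq A b x0 (extendPath τ) r) (extendPath σ) k - xstar))
      = pathWeight A τ * ((rkSeq A b x0 (extendPath τ) r - xstar) ⬝ᵥ
          ((kacMat A ^ k) *ᵥ (rkSeq A b x0 (extendPath τ) r - xstar))) := by
    intro τ
    rw [← RK.exp_vec hrows hF hz k (rkSeq A b x0 (extendPath τ) r),
      RK.dp_sum, Finset.mul_sum]
    refine Finset.sum_congr rfl fun σ _ => ?_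
    rw [dotProduct_smul, smul_eq_mul]
    ring
  rw [Finset.sum_congr rfl fun τ _ => hinner τ]
  -- bound the quadratic form and then the mean square error
  have hstep1 : ∀ τ : Fin r → Fin n,
      pathWeight A τ * ((rkSeq A b x0 (extendPath τ) r - xstar) ⬝ᵥ
          ((kacMat A ^ k) *ᵥ (rkSeq A b x0 (extendPath τ) r - xstar)))
      ≤ pathWeight A τ * (ρ ^ k * vnormSq (rkSeq A b x0 (extendPath τ) r - xstar)) := fun τ =>
    mul_le_mul_of_nonneg_left
      (RK.quad_pow hAp hF hP hk2 k (RK.rkSeq_mem hx0 (extendPath τ) r))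
      (RK.pathWeight_nonneg A τ)
  have hmse := RK.exp_sq (b := b) (xstar := xstar) hrows hF hAp hP hk2 r x0 hx0
  have hgeom := RK.geom_bound (P := matSpectralNorm Ap ^ 2) (F := frobSq A) hk2 r
  have hFVz : 0 ≤ (frobSq A)⁻¹ * Vz := by positivity
  have hmono : (∑ j ∈ Finset.range r, ρ ^ j) * ((frobSq A)⁻¹ * Vz)
      ≤ (matSpectralNorm Ap ^ 2 * frobSq A) * ((frobSq A)⁻¹ * Vz) :=
    mul_le_mul_of_nonneg_right hgeom hFVz
  have hPF : (matSpectralNorm Ap ^ 2 * frobSq A) * ((frobSq A)⁻¹ * Vz)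
      = matSpectralNorm Ap ^ 2 * Vz := by
    field_simp
  have hρk : 0 ≤ ρ ^ k := pow_nonneg hρ0 k
  calc ∑ τ : Fin r → Fin n, pathWeight A τ *
          ((rkSeq A b x0 (extendPath τ) r - xstar) ⬝ᵥ
            ((kacMat A ^ k) *ᵥ (rkSeq A b x0 (extendPath τ) r - xstar)))
      ≤ ∑ τ : Fin r → Fin n, pathWeight A τ *
          (ρ ^ k * vnormSq (rkSeq A b x0 (extendPath τ) r - xstar)) :=
        Finset.sum_le_sum fun τ _ => hstep1 τ
    _ = ρ ^ k * ∑ τ : Fin r → Fin n,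
          pathWeight A τ * vnormSq (rkSeq A b x0 (extendPath τ) r - xstar) := by
        rw [Finset.mul_sum]
        exact Finset.sum_congr rfl fun τ _ => by ring
    _ ≤ ρ ^ k * (ρ ^ r * vnormSq (x0 - xstar)
          + (∑ j ∈ Finset.range r, ρ ^ j) * ((frobSq A)⁻¹ * Vz)) :=
        mul_le_mul_of_nonneg_left hmse hρk
    _ ≤ ρ ^ (r + k) * vnormSq (x0 - xstar) + ρ ^ k * (matSpectralNorm Ap ^ 2 * Vz) := by
        have h1 : ρ ^ k * (ρ ^ r * vnormSq (x0 - xstar)) = ρ ^ (r + k) * vnormSq (x0 - xstar) := by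
          rw [pow_add]; ring
        have h2 : (∑ j ∈ Finset.range r, ρ ^ j) * ((frobSq A)⁻¹ * Vz)
            ≤ matSpectralNorm Ap ^ 2 * Vz := hPF ▸ hmono
        nlinarith [mul_le_mul_of_nonneg_left h2 hρk]
end
end
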